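/- arXiv:1711.09650 — 5 statements merged into one kernel-verified Lean document; each statement's English description precedes it below -/
import Mathlib

section
/- Let λ ≥ 0. Then the subspace W^r_λ = {v' + λv : v ∈ P^r_0} of P^r has dimension r, and P^r is the direct sum of W^r_λ and the span of L(1), i.e. W^r_λ ∩ span{L(1)} = {0} and W^r_λ + span{L(1)} = P^r. -/
open Polynomial MeasureTheory intervalIntegral

/-- The rescaled Legendre polynomials on `[t₀, t₁]`: `K i` has degree `i`,
`K i (t₁) = 1`, `K i (t₀) = (-1)^i`, and they are `L²(t₀,t₁)`-orthogonal with
`∫ K i ^ 2 = (t₁ - t₀)/(2 i + 1)`. -/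
def IsLegendreBasis (t₀ t₁ : ℝ) (K : ℕ → Polynomial ℝ) : Prop :=
  (∀ i, (K i).natDegree = i) ∧ (∀ i, (K i).eval t₁ = 1) ∧
  (∀ i, (K i).eval t₀ = (-1 : ℝ) ^ i) ∧
  (∀ i j, (∫ t in t₀..t₁, (K i).eval t * (K j).eval t) =
    if i = j then (t₁ - t₀) / (2 * (i : ℝ) + 1) else 0)

/-- The lifting operator `L(z) = (z/k) ∑_{i=0}^r (-1)^i (2i+1) K_i`. -/
noncomputable def Lop (t₀ t₁ : ℝ) (r : ℕ) (K : ℕ → Polynomial ℝ) (z : ℝ) : Polynomial ℝ :=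
  Polynomial.C (z / (t₁ - t₀)) *
    ∑ i ∈ Finset.range (r + 1), Polynomial.C ((-1 : ℝ) ^ i * (2 * (i : ℝ) + 1)) * K i

/-- The endpoint lifting operator `L̂(z) = (z/k) ∑_{i=0}^r (2i+1) K_i`. -/
noncomputable def LopE (t₀ t₁ : ℝ) (r : ℕ) (K : ℕ → Polynomial ℝ) (z : ℝ) : Polynomial ℝ :=
  Polynomial.C (z / (t₁ - t₀)) *
    ∑ i ∈ Finset.range (r + 1), Polynomial.C (2 * (i : ℝ) + 1) * K i

/-- The scalar dG operator `Γ_λ(v) = v' + L(v(t₀)) + λ v`. -/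
noncomputable def Gam (t₀ t₁ : ℝ) (r : ℕ) (K : ℕ → Polynomial ℝ) (lam : ℝ)
    (v : Polynomial ℝ) : Polynomial ℝ :=
  Polynomial.derivative v + Lop t₀ t₁ r K (v.eval t₀) + Polynomial.C lam * v

/-- The subspace `W^r_λ = {v' + λ v : v ∈ P^r_0}` of `P^r`. -/
noncomputable def Wsub (t₀ : ℝ) (r : ℕ) (lam : ℝ) : Submodule ℝ (Polynomial ℝ) :=
  Submodule.map (Polynomial.derivative + lam • (LinearMap.id : Polynomial ℝ →ₗ[ℝ] Polynomial ℝ))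
    (Polynomial.degreeLE ℝ r ⊓ LinearMap.ker (Polynomial.leval t₀))

section Aux

variable {t₀ t₁ : ℝ} {r : ℕ} {K : ℕ → Polynomial ℝ}

private lemma polyII (p : Polynomial ℝ) (a b : ℝ) :
    IntervalIntegrable (fun t => p.eval t) volume a b :=
  p.continuous.intervalIntegrable a b

/-- finrank of `degreeLE`. -/
private lemma fd_degreeLE (R : Type*) [Field R] (n : ℕ) :
    FiniteDimensional R (Polynomial.degreeLE R n) := by
  rw [← Polynomial.degreeLT_succ_eq_degreeLE]
  exact (Polynomial.degreeLTEquiv R (n + 1)).symm.finiteDimensional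

private lemma finrank_degreeLE (R : Type*) [Field R] (n : ℕ) :
    Module.finrank R (Polynomial.degreeLE R n) = n + 1 := by
  rw [← Polynomial.degreeLT_succ_eq_degreeLE]
  rw [(Polynomial.degreeLTEquiv R (n + 1)).finrank_eq]
  exact Module.finrank_fin_fun R

private lemma K_mem_degreeLE (hK : IsLegendreBasis t₀ t₁ K) {i : ℕ} (hi : i ≤ r) :
    K i ∈ Polynomial.degreeLE ℝ r := by
  rw [Polynomial.mem_degreeLE]
  exact le_trans (Polynomial.degree_le_natDegree) (by exact_mod_cast hK.1 i ▸ (Nat.cast_le.mpr hi))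

private lemma K_ne_zero (hK : IsLegendreBasis t₀ t₁ K) (i : ℕ) : K i ≠ 0 := by
  intro h
  have := hK.2.1 i
  rw [h] at this; simp at this

/-- The K's (indices `0..r`) span `degreeLE ℝ r`. -/
private lemma span_K_eq (ht : t₀ < t₁) (hK : IsLegendreBasis t₀ t₁ K) :
    Submodule.span ℝ (Set.range fun j : Fin (r + 1) => K (j : ℕ)) =
      Polynomial.degreeLE ℝ r := by
  have hk : t₁ - t₀ ≠ 0 := sub_ne_zero.mpr (ne_of_gt ht)
  have hli : LinearIndependent ℝ (fun j : Fin (r + 1) => K (j : ℕ)) := by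
    rw [Fintype.linearIndependent_iff]
    intro g hg j
    have heval : ∀ t : ℝ, (∑ i : Fin (r + 1), g i • K (i : ℕ)).eval t *
        (K (j : ℕ)).eval t = (∑ i : Fin (r + 1), g i *
          ((K (i : ℕ)).eval t * (K (j : ℕ)).eval t)) := by
      intro t
      rw [Polynomial.eval_finset_sum, Finset.sum_mul]
      refine Finset.sum_congr rfl fun i _ => ?_
      simp [mul_assoc]
    have hint : (∫ t in t₀..t₁, (∑ i : Fin (r + 1), g i • K (i : ℕ)).eval t *
        (K (j : ℕ)).eval t) = 0 := by
      rw [hg]; simp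
    rw [intervalIntegral.integral_congr (fun t _ => heval t)] at hint
    have hsum := intervalIntegral.integral_finset_sum (μ := volume) (a := t₀) (b := t₁)
      (s := (Finset.univ : Finset (Fin (r + 1))))
      (f := fun i t => g i * ((K (i : ℕ)).eval t * (K (j : ℕ)).eval t)) (fun i _ =>
      (continuous_const.mul ((Polynomial.continuous (K (i : ℕ))).mul
        (Polynomial.continuous (K (j : ℕ))))).intervalIntegrable t₀ t₁)
    rw [hsum] at hint
    have : ∀ i : Fin (r + 1), (∫ t in t₀..t₁, g i * ((K (i : ℕ)).eval t * (K (j : ℕ)).eval t))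
        = g i * (if (i : ℕ) = (j : ℕ) then (t₁ - t₀) / (2 * ((i : ℕ) : ℝ) + 1) else 0) := by
      intro i
      rw [intervalIntegral.integral_const_mul, hK.2.2.2]
    rw [Finset.sum_congr rfl (fun i _ => this i)] at hint
    rw [Finset.sum_eq_single j (fun i _ hne => by
        simp [Fin.val_eq_val, hne]) (by simp)] at hint
    simp only [if_pos rfl] at hint
    rcases mul_eq_zero.mp hint with h | h
    · exact h
    · exact absurd h (div_ne_zero hk (by positivity))
  have hle : Submodule.span ℝ (Set.range fun j : Fin (r + 1) => K (j : ℕ)) ≤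
      Polynomial.degreeLE ℝ r := by
    rw [Submodule.span_le]
    rintro _ ⟨j, rfl⟩
    exact K_mem_degreeLE hK (Nat.lt_succ_iff.mp j.2)
  have := fd_degreeLE ℝ r
  refine Submodule.eq_of_le_of_finrank_le hle ?_
  rw [finrank_degreeLE, finrank_span_eq_card hli, Fintype.card_fin]

/-- The lifting identity: `∫ L(1) V = V(t₀)` for `V ∈ P^r`. -/
private lemma lift_integral (ht : t₀ < t₁) (hK : IsLegendreBasis t₀ t₁ K)
    {V : Polynomial ℝ} (hV : V ∈ Polynomial.degreeLE ℝ r) :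
    (∫ t in t₀..t₁, (Lop t₀ t₁ r K 1).eval t * V.eval t) = V.eval t₀ := by
  have hk : t₁ - t₀ ≠ 0 := sub_ne_zero.mpr (ne_of_gt ht)
  rw [← span_K_eq ht hK] at hV
  induction hV using Submodule.span_induction with
  | mem x hx =>
    obtain ⟨j, rfl⟩ := hx
    have heval : ∀ t : ℝ, (Lop t₀ t₁ r K 1).eval t * (K (j : ℕ)).eval t =
        ∑ i ∈ Finset.range (r + 1), (1 / (t₁ - t₀) * ((-1 : ℝ) ^ i * (2 * (i : ℝ) + 1))) *
          ((K i).eval t * (K (j : ℕ)).eval t) := by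
      intro t
      simp only [Lop, Polynomial.eval_mul, Polynomial.eval_C, Polynomial.eval_finset_sum,
        Finset.mul_sum, Finset.sum_mul]
      refine Finset.sum_congr rfl fun i _ => ?_
      ring
    rw [intervalIntegral.integral_congr (fun t _ => heval t)]
    rw [intervalIntegral.integral_finset_sum
      (f := fun (i : ℕ) (t : ℝ) => (1 / (t₁ - t₀) * ((-1 : ℝ) ^ i * (2 * (i : ℝ) + 1))) *
        ((K i).eval t * (K (j : ℕ)).eval t)) (fun i _ =>
      (continuous_const.mul ((Polynomial.continuous (K i)).mul
        (Polynomial.continuous (K (j : ℕ))))).intervalIntegrable t₀ t₁)]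
    have hcalc : ∀ i ∈ Finset.range (r + 1),
        (∫ t in t₀..t₁, (1 / (t₁ - t₀) * ((-1 : ℝ) ^ i * (2 * (i : ℝ) + 1))) *
          ((K i).eval t * (K (j : ℕ)).eval t)) =
        if i = (j : ℕ) then (1 / (t₁ - t₀) * ((-1 : ℝ) ^ i * (2 * (i : ℝ) + 1))) *
          ((t₁ - t₀) / (2 * (i : ℝ) + 1)) else 0 := by
      intro i _
      rw [intervalIntegral.integral_const_mul, hK.2.2.2]
      split <;> simp
    rw [Finset.sum_congr rfl hcalc, Finset.sum_ite_eq' (Finset.range (r + 1)) (j : ℕ)]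
    rw [if_pos (Finset.mem_range.mpr j.2), hK.2.2.1]
    field_simp
  | zero => simp
  | add x y hx hy ihx ihy =>
    have hix : IntervalIntegrable (fun t => (Lop t₀ t₁ r K 1).eval t * x.eval t) volume t₀ t₁ :=
      ((Polynomial.continuous _).mul (Polynomial.continuous _)).intervalIntegrable t₀ t₁
    have hiy : IntervalIntegrable (fun t => (Lop t₀ t₁ r K 1).eval t * y.eval t) volume t₀ t₁ :=
      ((Polynomial.continuous _).mul (Polynomial.continuous _)).intervalIntegrable t₀ t₁
    simp only [Polynomial.eval_add, mul_add]
    rw [intervalIntegral.integral_add hix hiy, ihx, ihy]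
  | smul c x hx ihx =>
    simp only [Polynomial.eval_smul, smul_eq_mul, mul_left_comm]
    rw [intervalIntegral.integral_const_mul, ihx]

/-- `L(1)` has nonzero `r`-th coefficient. -/
private lemma Lop_coeff_r (ht : t₀ < t₁) (hK : IsLegendreBasis t₀ t₁ K) :
    (Lop t₀ t₁ r K 1).coeff r ≠ 0 := by
  have hk : t₁ - t₀ ≠ 0 := sub_ne_zero.mpr (ne_of_gt ht)
  rw [Lop, Polynomial.coeff_C_mul, Polynomial.finset_sum_coeff]
  have : ∀ i ∈ Finset.range (r + 1),
      (Polynomial.C ((-1 : ℝ) ^ i * (2 * (i : ℝ) + 1)) * K i).coeff r =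
      if i = r then ((-1 : ℝ) ^ r * (2 * (r : ℝ) + 1)) * (K r).coeff r else 0 := by
    intro i hi
    rw [Polynomial.coeff_C_mul]
    rcases eq_or_ne i r with rfl | hne
    · simp
    · have hlt : i < r := lt_of_le_of_ne (Nat.lt_succ_iff.mp (Finset.mem_range.mp hi)) hne
      rw [if_neg hne, Polynomial.coeff_eq_zero_of_natDegree_lt (by rw [hK.1 i]; exact hlt),
        mul_zero]
  rw [Finset.sum_congr rfl this, Finset.sum_ite_eq' (Finset.range (r + 1)) r,
    if_pos (Finset.mem_range.mpr (Nat.lt_succ_self r))]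
  have hKr : (K r).coeff r ≠ 0 := by
    have h1 : (K r).coeff r = (K r).leadingCoeff := by
      rw [Polynomial.leadingCoeff, hK.1 r]
    rw [h1]
    exact Polynomial.leadingCoeff_ne_zero.mpr (K_ne_zero hK r)
  apply mul_ne_zero (one_div_ne_zero hk)
  apply mul_ne_zero _ hKr
  apply mul_ne_zero (pow_ne_zero _ (by norm_num))
  positivity

private lemma Lop_mem (hK : IsLegendreBasis t₀ t₁ K) :
    Lop t₀ t₁ r K 1 ∈ Polynomial.degreeLE ℝ r := by
  rw [Lop, Polynomial.C_mul']
  refine Submodule.smul_mem _ _ (Submodule.sum_mem _ fun i hi => ?_)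
  rw [Polynomial.C_mul']
  exact Submodule.smul_mem _ _ (K_mem_degreeLE hK (Nat.lt_succ_iff.mp (Finset.mem_range.mp hi)))


/-- Integration by parts for `∫ v' v`. -/
private lemma integral_deriv_mul_self (v : Polynomial ℝ) :
    (∫ t in t₀..t₁, (Polynomial.derivative v).eval t * v.eval t) =
      (v.eval t₁ * v.eval t₁ - v.eval t₀ * v.eval t₀) / 2 := by
  have key := intervalIntegral.integral_eq_sub_of_hasDerivAt (a := t₀) (b := t₁)
    (f := fun t => v.eval t * v.eval t)
    (f' := fun t => 2 * ((Polynomial.derivative v).eval t * v.eval t))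
    (fun x _ => by
      have h : HasDerivAt (fun t => v.eval t * v.eval t) _ x :=
        (v.hasDerivAt x).mul (v.hasDerivAt x)
      refine h.congr_deriv ?_
      ring)
    ((continuous_const.mul ((Polynomial.derivative v).continuous.mul
      v.continuous)).intervalIntegrable t₀ t₁)
  rw [intervalIntegral.integral_const_mul] at key
  linarith

/-- A polynomial with zero `L²` norm on `(t₀,t₁)` is zero. -/
private lemma poly_eq_zero_of_integral_sq (ht : t₀ < t₁) {v : Polynomial ℝ}
    (h : (∫ t in t₀..t₁, v.eval t * v.eval t) = 0) : v = 0 := by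
  by_contra hv
  have hfin := Polynomial.finite_setOf_isRoot hv
  have hex : ∃ c ∈ Set.Icc t₀ t₁, 0 < v.eval c * v.eval c := by
    obtain ⟨c, hc⟩ := ((Set.Icc_infinite ht).diff hfin).nonempty
    exact ⟨c, hc.1, mul_self_pos.mpr hc.2⟩
  have hpos := intervalIntegral.integral_pos (f := fun t => v.eval t * v.eval t) ht
    ((v.continuous.mul v.continuous).continuousOn) (fun x _ => mul_self_nonneg _) hex
  linarith

/-- Injectivity of `v ↦ v' + λ v` on `{v : v(t₀) = 0}`. -/
private lemma T_inj (lam : ℝ) {v : Polynomial ℝ} (h0 : v.eval t₀ = 0)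
    (h : Polynomial.derivative v + lam • v = 0) : v = 0 := by
  rcases eq_or_ne lam 0 with rfl | hlam
  · rw [zero_smul, add_zero] at h
    have hd := Polynomial.natDegree_eq_zero_of_derivative_eq_zero h
    have hc := Polynomial.eq_C_of_natDegree_eq_zero hd
    rw [hc] at h0 ⊢
    rw [Polynomial.eval_C] at h0
    rw [h0, map_zero]
  · rcases eq_or_ne v.natDegree 0 with hd | hd
    · have hc := Polynomial.eq_C_of_natDegree_eq_zero hd
      rw [hc, Polynomial.derivative_C, zero_add] at h
      rcases smul_eq_zero.mp h with h' | h'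
      · exact absurd h' hlam
      · rw [hc, h']
    · exfalso
      have h2 := Polynomial.natDegree_derivative_lt hd
      have h1 : Polynomial.derivative v = -(lam • v) := eq_neg_of_add_eq_zero_left h
      rw [h1, natDegree_neg, Polynomial.smul_eq_C_mul, Polynomial.natDegree_C_mul hlam] at h2
      exact lt_irrefl _ h2

end Aux

/-- For `λ ≥ 0`, `dim W^r_λ = r` and `P^r = W^r_λ ⊕ span {L(1)}`. -/
theorem stmt_0 (t₀ t₁ : ℝ) (ht : t₀ < t₁) (r : ℕ) (K : ℕ → Polynomial ℝ)
    (hK : IsLegendreBasis t₀ t₁ K) (lam : ℝ) (hlam : 0 ≤ lam) :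
    Module.finrank ℝ (Wsub t₀ r lam) = r ∧
    Wsub t₀ r lam ⊓ Submodule.span ℝ {Lop t₀ t₁ r K 1} = ⊥ ∧
    Wsub t₀ r lam ⊔ Submodule.span ℝ {Lop t₀ t₁ r K 1} = Polynomial.degreeLE ℝ r := by
  classical
  have hk : t₁ - t₀ ≠ 0 := sub_ne_zero.mpr (ne_of_gt ht)
  haveI := fd_degreeLE ℝ r
  set T := (Polynomial.derivative + lam • (LinearMap.id : Polynomial ℝ →ₗ[ℝ] Polynomial ℝ))
    with hTdef
  set U := (Polynomial.degreeLE ℝ r ⊓ LinearMap.ker (Polynomial.leval t₀)) with hUdef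
  have hTapp : ∀ v : Polynomial ℝ, T v = Polynomial.derivative v + lam • v := fun v => rfl
  have hWdef : Wsub t₀ r lam = Submodule.map T U := rfl
  have hUD : U ≤ Polynomial.degreeLE ℝ r := inf_le_left
  haveI : FiniteDimensional ℝ U := Submodule.finiteDimensional_of_le hUD
  -- membership facts for elements of U
  have hUmem : ∀ v ∈ U, v ∈ Polynomial.degreeLE ℝ r ∧ v.eval t₀ = 0 := by
    intro v hv
    rcases Submodule.mem_inf.mp hv with ⟨h1, h2⟩
    exact ⟨h1, by simpa [Polynomial.leval] using h2⟩
  -- W ⊆ degreeLE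
  have hWD : Wsub t₀ r lam ≤ Polynomial.degreeLE ℝ r := by
    rw [hWdef]
    rintro _ ⟨v, hv, rfl⟩
    obtain ⟨hvD, -⟩ := hUmem v hv
    rw [hTapp]
    refine Submodule.add_mem _ ?_ (Submodule.smul_mem _ _ hvD)
    rw [Polynomial.mem_degreeLE] at hvD ⊢
    exact (Polynomial.degree_derivative_le).trans hvD
  haveI : FiniteDimensional ℝ (Wsub t₀ r lam) := Submodule.finiteDimensional_of_le hWD
  -- finrank U = r
  have hUrank : Module.finrank ℝ U = r := by
    set g := (Polynomial.leval t₀ : Polynomial ℝ →ₗ[ℝ] ℝ).domRestrict (Polynomial.degreeLE ℝ r)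
      with hgdef
    have hker : Submodule.map (Polynomial.degreeLE ℝ r).subtype (LinearMap.ker g) = U := by
      rw [hgdef, LinearMap.ker_domRestrict, Submodule.map_comap_subtype]
    have hsurj : LinearMap.range g = ⊤ := by
      rw [LinearMap.range_eq_top]
      intro x
      refine ⟨⟨Polynomial.C x, ?_⟩, by simp [hgdef]⟩
      rw [Polynomial.mem_degreeLE]
      exact Polynomial.degree_C_le.trans (by exact_mod_cast Nat.cast_nonneg' r)
    have hrn := LinearMap.finrank_range_add_finrank_ker g
    rw [hsurj, finrank_top, Module.finrank_self, finrank_degreeLE] at hrn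
    have : Module.finrank ℝ (LinearMap.ker g) = r := by omega
    rw [← hker, Submodule.finrank_map_subtype_eq, this]
  -- injectivity of T on U, and finrank W = r
  have hinj : Function.Injective (T.comp U.subtype) := by
    rw [← LinearMap.ker_eq_bot, LinearMap.ker_eq_bot']
    rintro ⟨v, hv⟩ hTv
    obtain ⟨-, hv0⟩ := hUmem v hv
    have : T v = 0 := by simpa using hTv
    rw [hTapp] at this
    exact Subtype.ext (T_inj lam hv0 this)
  have hrange : LinearMap.range (T.comp U.subtype) = Wsub t₀ r lam := by
    rw [LinearMap.range_comp, Submodule.range_subtype, hWdef]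
  have hWrank : Module.finrank ℝ (Wsub t₀ r lam) = r := by
    rw [← hrange, ← hUrank]
    exact (LinearEquiv.ofInjective (T.comp U.subtype) hinj).symm.finrank_eq
  -- L(1) facts
  have hL1ne : Lop t₀ t₁ r K 1 ≠ 0 := by
    intro h
    exact Lop_coeff_r ht hK (by rw [h, Polynomial.coeff_zero])
  have hL1D : Lop t₀ t₁ r K 1 ∈ Polynomial.degreeLE ℝ r := Lop_mem hK
  have hspanD : Submodule.span ℝ {Lop t₀ t₁ r K 1} ≤ Polynomial.degreeLE ℝ r := by
    rw [Submodule.span_le, Set.singleton_subset_iff]; exact hL1D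
  -- disjointness
  have hdisj : Wsub t₀ r lam ⊓ Submodule.span ℝ {Lop t₀ t₁ r K 1} = ⊥ := by
    rw [Submodule.eq_bot_iff]
    intro w hw
    rcases Submodule.mem_inf.mp hw with ⟨hwW, hwS⟩
    rw [hWdef] at hwW
    obtain ⟨v, hvU, rfl⟩ := hwW
    obtain ⟨hvD, hv0⟩ := hUmem v hvU
    obtain ⟨c, hc⟩ := Submodule.mem_span_singleton.mp hwS
    rcases eq_or_lt_of_le hlam with hlam0 | hlampos
    · -- λ = 0 : degree argument
      have hTv : T v = Polynomial.derivative v := by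
        rw [hTapp, ← hlam0, zero_smul, add_zero]
      have hcoeff : (T v).coeff r = 0 := by
        rw [hTv, Polynomial.coeff_derivative]
        have : v.coeff (r + 1) = 0 := by
          apply Polynomial.coeff_eq_zero_of_degree_lt
          rw [Polynomial.mem_degreeLE] at hvD
          exact lt_of_le_of_lt hvD (by exact_mod_cast Nat.lt_succ_self r)
        rw [this, zero_mul]
      rw [← hc, Polynomial.coeff_smul, smul_eq_mul] at hcoeff
      rcases mul_eq_zero.mp hcoeff with h' | h'
      · rw [← hc, h', zero_smul]
      · exact absurd h' (Lop_coeff_r ht hK)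
    · -- λ > 0 : energy argument
      have hI1 : (∫ t in t₀..t₁, (T v).eval t * v.eval t) = 0 := by
        have : ∀ t : ℝ, (T v).eval t * v.eval t =
            c * ((Lop t₀ t₁ r K 1).eval t * v.eval t) := by
          intro t
          rw [← hc, Polynomial.eval_smul, smul_eq_mul, mul_assoc]
        rw [intervalIntegral.integral_congr (fun t _ => this t),
          intervalIntegral.integral_const_mul, lift_integral ht hK hvD, hv0, mul_zero]
      have hId := integral_deriv_mul_self (t₀ := t₀) (t₁ := t₁) v
      have hI2 : (∫ t in t₀..t₁, (T v).eval t * v.eval t) =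
          (v.eval t₁ * v.eval t₁) / 2 + lam * ∫ t in t₀..t₁, v.eval t * v.eval t := by
        have heq : ∀ t : ℝ, (T v).eval t * v.eval t =
            (Polynomial.derivative v).eval t * v.eval t + lam * (v.eval t * v.eval t) := by
          intro t
          rw [hTapp]
          simp [Polynomial.eval_smul]
          ring
        rw [intervalIntegral.integral_congr (fun t _ => heq t),
          intervalIntegral.integral_add
            (f := fun t => (Polynomial.derivative v).eval t * v.eval t)
            (g := fun t => lam * (v.eval t * v.eval t))
            (((Polynomial.derivative v).continuous.mul v.continuous).intervalIntegrable t₀ t₁)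
            ((continuous_const.mul (v.continuous.mul v.continuous)).intervalIntegrable t₀ t₁),
          intervalIntegral.integral_const_mul, hId, hv0]
        ring
      have hnn : 0 ≤ ∫ t in t₀..t₁, v.eval t * v.eval t :=
        intervalIntegral.integral_nonneg (le_of_lt ht) (fun u _ => mul_self_nonneg _)
      have hsq : 0 ≤ v.eval t₁ * v.eval t₁ := mul_self_nonneg _
      have hz : (∫ t in t₀..t₁, v.eval t * v.eval t) = 0 := by
        rw [hI2] at hI1
        nlinarith
      have hv := poly_eq_zero_of_integral_sq ht hz
      rw [hv, map_zero]
  refine ⟨hWrank, hdisj, ?_⟩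
  have hsum := Submodule.finrank_sup_add_finrank_inf_eq (Wsub t₀ r lam)
    (Submodule.span ℝ {Lop t₀ t₁ r K 1})
  rw [hdisj, finrank_bot, hWrank, finrank_span_singleton hL1ne, add_zero] at hsum
  refine Submodule.eq_of_le_of_finrank_le (sup_le hWD hspanD) ?_
  rw [finrank_degreeLE, hsum]
end

section
/- Let λ ≥ 0. The linear map Ψ : P^r → P^r defined by Ψ(v) = v' − λ v − L̂(v(t₁)) is a bijection of P^r onto itself; in particular, there exists exactly one φ ∈ P^r satisfying φ' − λ φ − L̂(φ(t₁)) = L(1) (the dG dual solution is well defined). -/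
open Polynomial MeasureTheory intervalIntegral

lemma integ_deriv (a b : ℝ) (p : Polynomial ℝ) :
    (∫ t in a..b, (derivative p).eval t) = p.eval b - p.eval a := by
  refine intervalIntegral.integral_eq_sub_of_hasDerivAt (fun x _ => p.hasDerivAt x) ?_
  exact ((derivative p).continuous).intervalIntegrable _ _

lemma sq_int (a b : ℝ) (p : Polynomial ℝ) :
    (∫ t in a..b, (derivative p).eval t * p.eval t)
      = (p.eval b ^ 2 - p.eval a ^ 2) / 2 := by
  have h := integ_deriv a b (p * p)
  have h2 : (∫ t in a..b, (derivative (p * p)).eval t)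
      = 2 * ∫ t in a..b, (derivative p).eval t * p.eval t := by
    rw [← intervalIntegral.integral_const_mul]
    apply intervalIntegral.integral_congr
    intro t _
    simp only [derivative_mul, eval_add, eval_mul]
    ring
  rw [h2] at h
  simp only [eval_mul] at h
  nlinarith [h]

lemma legendre_repr (t₀ t₁ : ℝ) (K : ℕ → Polynomial ℝ)
    (hdeg : ∀ i, (K i).natDegree = i) (h1 : ∀ i, (K i).eval t₁ = 1) :
    ∀ (n : ℕ) (V : Polynomial ℝ), V.natDegree ≤ n →
      ∃ c : ℕ → ℝ, V = ∑ i ∈ Finset.range (n + 1), C (c i) * K i := by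
  intro n
  induction n with
  | zero =>
    intro V hV
    refine ⟨fun _ => V.coeff 0, ?_⟩
    have hK0 : K 0 = 1 := by
      have h := eq_C_of_natDegree_le_zero (le_of_eq (hdeg 0))
      have := h1 0
      rw [h] at this ⊢
      rw [eval_C] at this
      rw [this]; simp
    rw [Finset.sum_range_one, hK0, mul_one]
    exact (eq_C_of_natDegree_le_zero hV)
  | succ n ih =>
    intro V hV
    have hKne : K (n+1) ≠ 0 := by
      intro h
      have := h1 (n+1); rw [h] at this; simp at this
    have hlc : (K (n+1)).leadingCoeff ≠ 0 := leadingCoeff_ne_zero.2 hKne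
    set a := V.coeff (n+1) / (K (n+1)).leadingCoeff with ha
    have hW : (V - C a * K (n+1)).natDegree ≤ n := by
      rw [natDegree_le_iff_coeff_eq_zero]
      intro m hm
      rcases eq_or_lt_of_le (Nat.succ_le_of_lt hm) with h | h
      · have hcf : (K (n+1)).coeff (n+1) = (K (n+1)).leadingCoeff := by
          rw [leadingCoeff, hdeg]
        rw [coeff_sub, coeff_C_mul, ← h, hcf, ha, div_mul_cancel₀ _ hlc, sub_self]
      · have hv0 : V.coeff m = 0 := coeff_eq_zero_of_natDegree_lt (lt_of_le_of_lt hV h)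
        have hk0 : (K (n+1)).coeff m = 0 :=
          coeff_eq_zero_of_natDegree_lt (by rw [hdeg]; exact h)
        rw [coeff_sub, coeff_C_mul, hv0, hk0, mul_zero, sub_self]
    obtain ⟨c, hc⟩ := ih _ hW
    refine ⟨fun i => if i = n+1 then a else c i, ?_⟩
    rw [Finset.sum_range_succ]
    have heq : ∑ i ∈ Finset.range (n+1), C (if i = n+1 then a else c i) * K i
        = ∑ i ∈ Finset.range (n+1), C (c i) * K i := by
      refine Finset.sum_congr rfl fun i hi => ?_
      rw [if_neg (by have := Finset.mem_range.1 hi; omega)]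
    rw [heq]
    simp only [if_pos rfl, if_true]
    linear_combination hc

lemma lopE_deg (t₀ t₁ : ℝ) (r : ℕ) (K : ℕ → Polynomial ℝ)
    (hdeg : ∀ i, (K i).natDegree = i) (z : ℝ) : (LopE t₀ t₁ r K z).natDegree ≤ r := by
  refine le_trans (natDegree_C_mul_le _ _) ?_
  refine Polynomial.natDegree_sum_le_of_forall_le _ _ fun i hi => ?_
  refine le_trans (natDegree_C_mul_le _ _) ?_
  rw [hdeg]
  exact Nat.lt_succ_iff.1 (Finset.mem_range.1 hi)

lemma lop_deg (t₀ t₁ : ℝ) (r : ℕ) (K : ℕ → Polynomial ℝ)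
    (hdeg : ∀ i, (K i).natDegree = i) (z : ℝ) : (Lop t₀ t₁ r K z).natDegree ≤ r := by
  refine le_trans (natDegree_C_mul_le _ _) ?_
  refine Polynomial.natDegree_sum_le_of_forall_le _ _ fun i hi => ?_
  refine le_trans (natDegree_C_mul_le _ _) ?_
  rw [hdeg]
  exact Nat.lt_succ_iff.1 (Finset.mem_range.1 hi)

lemma lopE_K (t₀ t₁ : ℝ) (ht : t₀ < t₁) (r : ℕ) (K : ℕ → Polynomial ℝ)
    (hK : IsLegendreBasis t₀ t₁ K) (z : ℝ) (j : ℕ) (hj : j < r + 1) :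
    (∫ t in t₀..t₁, (LopE t₀ t₁ r K z).eval t * (K j).eval t) = z := by
  obtain ⟨hdeg, h1, h0, horth⟩ := hK
  have hk : t₁ - t₀ ≠ 0 := sub_ne_zero.2 (ne_of_gt ht)
  have hpt : ∀ t, (LopE t₀ t₁ r K z).eval t * (K j).eval t
      = ∑ i ∈ Finset.range (r+1),
          (z/(t₁-t₀) * (2*(i:ℝ)+1)) * ((K i).eval t * (K j).eval t) := by
    intro t
    simp only [LopE, eval_mul, eval_C, eval_finset_sum, Finset.mul_sum, Finset.sum_mul]
    exact Finset.sum_congr rfl fun i _ => by ring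
  rw [intervalIntegral.integral_congr (fun t _ => hpt t)]
  rw [intervalIntegral.integral_finset_sum
    (f := fun (i : ℕ) t => (z/(t₁-t₀) * (2*(i:ℝ)+1)) * ((K i).eval t * (K j).eval t)) (fun i _ =>
    (continuous_const.mul ((K i).continuous.mul (K j).continuous)).intervalIntegrable _ _)]
  rw [Finset.sum_eq_single_of_mem j (Finset.mem_range.2 hj)]
  · rw [intervalIntegral.integral_const_mul, horth j j, if_pos rfl]
    have h2j : (2*(j:ℝ)+1) ≠ 0 := by positivity
    field_simp
  · intro i _ hij
    rw [intervalIntegral.integral_const_mul, horth i j, if_neg hij, mul_zero]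

lemma lopE_int (t₀ t₁ : ℝ) (ht : t₀ < t₁) (r : ℕ) (K : ℕ → Polynomial ℝ)
    (hK : IsLegendreBasis t₀ t₁ K) (z : ℝ) (V : Polynomial ℝ) (hV : V.natDegree ≤ r) :
    (∫ t in t₀..t₁, (LopE t₀ t₁ r K z).eval t * V.eval t) = z * V.eval t₁ := by
  obtain ⟨c, rfl⟩ := legendre_repr t₀ t₁ K hK.1 hK.2.1 r V hV
  have hpt : ∀ t, (LopE t₀ t₁ r K z).eval t *
        (∑ j ∈ Finset.range (r+1), C (c j) * K j).eval t
      = ∑ j ∈ Finset.range (r+1), c j * ((LopE t₀ t₁ r K z).eval t * (K j).eval t) := by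
    intro t
    rw [eval_finset_sum, Finset.mul_sum]
    exact Finset.sum_congr rfl fun j _ => by rw [eval_mul, eval_C]; ring
  rw [intervalIntegral.integral_congr (fun t _ => hpt t)]
  rw [intervalIntegral.integral_finset_sum
    (f := fun j t => c j * ((LopE t₀ t₁ r K z).eval t * (K j).eval t)) (fun j _ =>
    (continuous_const.mul ((LopE t₀ t₁ r K z).continuous.mul (K j).continuous)).intervalIntegrable _ _)]
  simp only [intervalIntegral.integral_const_mul]
  rw [Finset.sum_congr rfl (fun j hj => by
    rw [lopE_K t₀ t₁ ht r K ⟨hK.1, hK.2.1, hK.2.2⟩ z j (Finset.mem_range.1 hj)])]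
  rw [eval_finset_sum, Finset.mul_sum]
  exact Finset.sum_congr rfl fun j _ => by rw [eval_mul, eval_C, hK.2.1 j]; ring

/-- For `λ ≥ 0`, the map `Ψ(v) = v' - λ v - L̂(v(t₁))` is a bijection of `P^r` onto itself;
in particular there is exactly one `φ ∈ P^r` with `Ψ(φ) = L(1)` (the dG dual solution). -/
theorem stmt_1 (t₀ t₁ : ℝ) (ht : t₀ < t₁) (r : ℕ) (K : ℕ → Polynomial ℝ)
    (hK : IsLegendreBasis t₀ t₁ K) (lam : ℝ) (hlam : 0 ≤ lam) :
    (∀ w : Polynomial ℝ, w.natDegree ≤ r → ∃! v : Polynomial ℝ, v.natDegree ≤ r ∧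
      Polynomial.derivative v - Polynomial.C lam * v - LopE t₀ t₁ r K (v.eval t₁) = w) ∧
    (∃! φ : Polynomial ℝ, φ.natDegree ≤ r ∧
      Polynomial.derivative φ - Polynomial.C lam * φ - LopE t₀ t₁ r K (φ.eval t₁)
        = Lop t₀ t₁ r K 1) := by
  have hk : t₁ - t₀ ≠ 0 := sub_ne_zero.2 (ne_of_gt ht)
  obtain ⟨hdeg, h1, h0, horth⟩ := id hK
  have hsmul : ∀ z : ℝ, C z * LopE t₀ t₁ r K 1 = LopE t₀ t₁ r K z := by
    intro z
    rw [LopE, LopE, ← mul_assoc, ← C_mul, mul_one_div]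
  set Ψ₀ : Polynomial ℝ →ₗ[ℝ] Polynomial ℝ :=
    Polynomial.derivative - lam • LinearMap.id -
      (LinearMap.toSpanSingleton ℝ (Polynomial ℝ) (LopE t₀ t₁ r K 1)).comp
        (Polynomial.leval t₁) with hΨdef
  have hΨ₀ : ∀ v : Polynomial ℝ,
      Ψ₀ v = derivative v - C lam * v - LopE t₀ t₁ r K (v.eval t₁) := by
    intro v
    simp only [hΨdef, LinearMap.sub_apply, LinearMap.smul_apply, LinearMap.id_apply,
      LinearMap.comp_apply, Polynomial.leval_apply, LinearMap.toSpanSingleton_apply,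
      smul_eq_C_mul, hsmul]
  have hmem_iff : ∀ p : Polynomial ℝ, p ∈ degreeLT ℝ (r+1) ↔ p.natDegree ≤ r := by
    intro p
    rw [Polynomial.mem_degreeLT]
    by_cases hp : p = 0
    · subst hp
      simp only [degree_zero, natDegree_zero, Nat.zero_le, iff_true]
      exact WithBot.bot_lt_coe _
    · rw [← Polynomial.natDegree_lt_iff_degree_lt hp, Nat.lt_succ_iff]
  -- injectivity core
  have key : ∀ v : Polynomial ℝ, v.natDegree ≤ r →
      derivative v - C lam * v - LopE t₀ t₁ r K (v.eval t₁) = 0 → v = 0 := by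
    intro v hv hveq
    rw [sub_sub, sub_eq_zero] at hveq
    have hI1 := sq_int t₀ t₁ v
    have hLE := lopE_int t₀ t₁ ht r K hK (v.eval t₁) v hv
    have hI2 : (∫ t in t₀..t₁, (derivative v).eval t * v.eval t)
        = lam * (∫ t in t₀..t₁, v.eval t * v.eval t) + v.eval t₁ ^ 2 := by
      have hpt : ∀ t, (derivative v).eval t * v.eval t
          = lam * (v.eval t * v.eval t)
            + (LopE t₀ t₁ r K (v.eval t₁)).eval t * v.eval t := by
        intro t; rw [hveq]; simp only [eval_add, eval_mul, eval_C]; ring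
      rw [intervalIntegral.integral_congr (fun t _ => hpt t),
        intervalIntegral.integral_add (f := fun t => lam * (v.eval t * v.eval t))
          (g := fun t => (LopE t₀ t₁ r K (v.eval t₁)).eval t * v.eval t)
          ((continuous_const.mul (v.continuous.mul v.continuous)).intervalIntegrable _ _)
          (((LopE t₀ t₁ r K (v.eval t₁)).continuous.mul v.continuous).intervalIntegrable _ _),
        intervalIntegral.integral_const_mul, hLE]
      ring
    have hvv : 0 ≤ ∫ t in t₀..t₁, v.eval t * v.eval t :=
      intervalIntegral.integral_nonneg ht.le (fun t _ => mul_self_nonneg _)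
    have hlamI : 0 ≤ lam * ∫ t in t₀..t₁, v.eval t * v.eval t := mul_nonneg hlam hvv
    have ht1sq : v.eval t₁ ^ 2 = 0 := by
      have := hI1.symm.trans hI2
      nlinarith [sq_nonneg (v.eval t₀), sq_nonneg (v.eval t₁)]
    have ht1 : v.eval t₁ = 0 := by
      exact pow_eq_zero_iff (two_ne_zero) |>.1 ht1sq
    rw [ht1] at hveq
    have hL0 : LopE t₀ t₁ r K 0 = 0 := by rw [LopE]; simp
    rw [hL0, add_zero] at hveq
    by_cases hd : v.natDegree = 0
    · have hvC := eq_C_of_natDegree_le_zero hd.le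
      rw [hvC] at ht1 ⊢
      rw [eval_C] at ht1
      rw [ht1, map_zero]
    · exfalso
      by_cases hl0 : lam = 0
      · rw [hl0, map_zero, zero_mul] at hveq
        exact hd (natDegree_eq_zero_of_derivative_eq_zero hveq)
      · have h1' := natDegree_derivative_lt hd
        rw [hveq, natDegree_C_mul hl0] at h1'
        exact lt_irrefl _ h1'
  have hmaps : ∀ p ∈ degreeLT ℝ (r+1), Ψ₀ p ∈ degreeLT ℝ (r+1) := by
    intro p hp
    rw [hmem_iff] at hp ⊢
    rw [hΨ₀]
    refine le_trans (natDegree_sub_le _ _)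
      (max_le (le_trans (natDegree_sub_le _ _) (max_le ?_ ?_)) ?_)
    · exact le_trans (natDegree_derivative_le p) (by omega)
    · exact le_trans (natDegree_C_mul_le _ _) hp
    · exact lopE_deg t₀ t₁ r K hdeg _
  haveI : FiniteDimensional ℝ (degreeLT ℝ (r+1) : Submodule ℝ (Polynomial ℝ)) :=
    (Polynomial.degreeLTEquiv ℝ (r+1)).symm.finiteDimensional
  set Ψ : degreeLT ℝ (r+1) →ₗ[ℝ] degreeLT ℝ (r+1) := Ψ₀.restrict hmaps with hΨr
  have hinj : Function.Injective Ψ := by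
    rw [injective_iff_map_eq_zero]
    intro v hv0
    have hval : Ψ₀ v.1 = 0 := by
      have := congrArg Subtype.val hv0
      simpa [hΨr, LinearMap.restrict_apply] using this
    have hzero : (v : Polynomial ℝ) = 0 :=
      key v.1 ((hmem_iff _).1 v.2) (by rw [← hΨ₀]; exact hval)
    exact Subtype.ext hzero
  have hsurj : Function.Surjective Ψ := LinearMap.injective_iff_surjective.1 hinj
  have main : ∀ w : Polynomial ℝ, w.natDegree ≤ r → ∃! v : Polynomial ℝ, v.natDegree ≤ r ∧
      derivative v - C lam * v - LopE t₀ t₁ r K (v.eval t₁) = w := by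
    intro w hw
    obtain ⟨v, hv⟩ := hsurj ⟨w, (hmem_iff w).2 hw⟩
    have hveq : derivative (v : Polynomial ℝ) - C lam * (v : Polynomial ℝ)
        - LopE t₀ t₁ r K ((v : Polynomial ℝ).eval t₁) = w := by
      have := congrArg Subtype.val hv
      rw [hΨr, LinearMap.restrict_apply] at this
      rw [← hΨ₀]
      exact this
    refine ⟨v.1, ⟨(hmem_iff _).1 v.2, hveq⟩, ?_⟩
    rintro u ⟨hu1, hu2⟩
    have hsub : (u - v.1).natDegree ≤ r :=
      le_trans (natDegree_sub_le _ _) (max_le hu1 ((hmem_iff _).1 v.2))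
    have hz : derivative (u - v.1) - C lam * (u - v.1)
        - LopE t₀ t₁ r K ((u - v.1).eval t₁) = 0 := by
      have hlin := map_sub Ψ₀ u v.1
      rw [hΨ₀, hΨ₀, hΨ₀] at hlin
      rw [hlin, hu2, hveq, sub_self]
    have := key _ hsub hz
    rwa [sub_eq_zero] at this
  exact ⟨main, main _ (lop_deg t₀ t₁ r K hdeg 1)⟩
end

section
/- Let λ ≥ 0, let ψ ∈ P^r satisfy Γ_λ(ψ) = L(1), and let φ ∈ P^r satisfy φ' − λ φ − L̂(φ(t₁)) = L(1) on I. Then the initial values satisfy φ(t₀) = −ψ(t₀). -/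
open Polynomial MeasureTheory intervalIntegral

private lemma poly_ii (p q : Polynomial ℝ) (a b : ℝ) :
    IntervalIntegrable (fun t => p.eval t * q.eval t) volume a b :=
  (p.continuous.mul q.continuous).intervalIntegrable a b

private lemma span_K_aux (K : ℕ → Polynomial ℝ) (hdeg : ∀ i, (K i).natDegree = i)
    (hne : ∀ i, K i ≠ 0) (r : ℕ) :
    ∀ V : Polynomial ℝ, V.natDegree ≤ r →
      V ∈ Submodule.span ℝ (K '' Set.Iic r) := by
  suffices H : ∀ d : ℕ, ∀ V : Polynomial ℝ, V.natDegree = d → d ≤ r →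
      V ∈ Submodule.span ℝ (K '' Set.Iic r) by
    exact fun V hV => H V.natDegree V rfl hV
  intro d
  induction d using Nat.strong_induction_on with
  | _ d ih =>
    intro V hd hdr
    by_cases h0 : V = 0
    · simp [h0]
    have hKlc : (K d).coeff d ≠ 0 := by
      have h : (K d).coeff d = (K d).leadingCoeff := by rw [Polynomial.leadingCoeff, hdeg d]
      rw [h]
      exact leadingCoeff_ne_zero.mpr (hne d)
    set c := V.coeff d / (K d).coeff d with hc
    have hKmem : K d ∈ Submodule.span ℝ (K '' Set.Iic r) :=
      Submodule.subset_span ⟨d, hdr, rfl⟩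
    set W := V - Polynomial.C c * K d with hW
    have hWd : W.natDegree ≤ d := by
      apply le_trans (natDegree_sub_le _ _)
      apply max_le (le_of_eq hd)
      exact le_trans (natDegree_C_mul_le _ _) (le_of_eq (hdeg d))
    have hWc : W.coeff d = 0 := by
      simp [hW, hc, coeff_C_mul]
      field_simp
      simp
    have hVW : V = W + c • K d := by
      simp [hW, Polynomial.smul_eq_C_mul]
    by_cases hW0 : W = 0
    · rw [hVW, hW0, zero_add]
      exact Submodule.smul_mem _ _ hKmem
    · have hlt : W.natDegree < d := by
        rcases lt_or_eq_of_le hWd with h | h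
        · exact h
        · exact absurd (leadingCoeff_eq_zero.mp (by rw [leadingCoeff, h]; exact hWc)) hW0
      rw [hVW]
      exact Submodule.add_mem _ (ih _ hlt W rfl (le_trans (le_of_lt hlt) hdr))
        (Submodule.smul_mem _ _ hKmem)

private lemma inner_eval (t₀ t₁ : ℝ) (r : ℕ) (K : ℕ → Polynomial ℝ)
    (P : Polynomial ℝ) (z s : ℝ)
    (hbase : ∀ j, j ≤ r → (∫ t in t₀..t₁, P.eval t * (K j).eval t) = z * (K j).eval s)
    (V : Polynomial ℝ) (hV : V ∈ Submodule.span ℝ (K '' Set.Iic r)) :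
    (∫ t in t₀..t₁, P.eval t * V.eval t) = z * V.eval s := by
  induction hV using Submodule.span_induction with
  | mem x hx => obtain ⟨j, hj, rfl⟩ := hx; exact hbase j hj
  | zero => simp
  | add x y hx hy hx' hy' =>
      have : ∀ t, P.eval t * (x + y).eval t = P.eval t * x.eval t + P.eval t * y.eval t := by
        intro t; simp [mul_add]
      rw [intervalIntegral.integral_congr (g := fun t => P.eval t * x.eval t + P.eval t * y.eval t)
        (fun t _ => this t),
        intervalIntegral.integral_add (poly_ii P x t₀ t₁) (poly_ii P y t₀ t₁), hx', hy']
      simp [mul_add]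
  | smul a x hx hx' =>
      have : ∀ t, P.eval t * (a • x).eval t = a * (P.eval t * x.eval t) := by
        intro t; simp; ring
      rw [intervalIntegral.integral_congr (g := fun t => a * (P.eval t * x.eval t))
        (fun t _ => this t), intervalIntegral.integral_const_mul, hx']
      simp; ring

private lemma base_int (t₀ t₁ : ℝ) (ht : t₀ < t₁) (r : ℕ) (K : ℕ → Polynomial ℝ)
    (horth : ∀ i j, (∫ t in t₀..t₁, (K i).eval t * (K j).eval t) =
      if i = j then (t₁ - t₀) / (2 * (i : ℝ) + 1) else 0)
    (z : ℝ) (a : ℕ → ℝ) (j : ℕ) (hj : j ≤ r) :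
    (∫ t in t₀..t₁,
        (Polynomial.C (z / (t₁ - t₀)) *
          ∑ i ∈ Finset.range (r + 1), Polynomial.C (a i) * K i).eval t * (K j).eval t)
      = z / (t₁ - t₀) * (a j * ((t₁ - t₀) / (2 * (j : ℝ) + 1))) := by
  have key : ∀ t, (Polynomial.C (z / (t₁ - t₀)) *
          ∑ i ∈ Finset.range (r + 1), Polynomial.C (a i) * K i).eval t * (K j).eval t
      = ∑ i ∈ Finset.range (r + 1),
          (z / (t₁ - t₀) * a i) * ((K i).eval t * (K j).eval t) := by
    intro t
    simp [eval_finset_sum, Finset.sum_mul, Finset.mul_sum]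
    congr 1; ext i; ring
  rw [intervalIntegral.integral_congr (g := fun t => ∑ i ∈ Finset.range (r + 1),
        (z / (t₁ - t₀) * a i) * ((K i).eval t * (K j).eval t)) (fun t _ => key t),
    intervalIntegral.integral_finset_sum]
  · have : ∀ i ∈ Finset.range (r + 1),
        (∫ t in t₀..t₁, (z / (t₁ - t₀) * a i) * ((K i).eval t * (K j).eval t))
          = (z / (t₁ - t₀) * a i) * (if i = j then (t₁ - t₀) / (2 * (i : ℝ) + 1) else 0) := by
      intro i _
      rw [intervalIntegral.integral_const_mul, horth i j]
    rw [Finset.sum_congr rfl this]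
    simp only [mul_ite, mul_zero]
    rw [Finset.sum_ite_eq' (Finset.range (r + 1)) j]
    simp [Finset.mem_range, Nat.lt_succ_iff.mpr hj]
    ring
  · intro i _
    exact ((poly_ii (K i) (K j) t₀ t₁).const_mul _)

/-- The initial values of the dG fundamental solution `ψ` and the dG dual solution `φ`
satisfy `φ(t₀) = -ψ(t₀)`. -/
theorem stmt_3 (t₀ t₁ : ℝ) (ht : t₀ < t₁) (r : ℕ) (K : ℕ → Polynomial ℝ)
    (hK : IsLegendreBasis t₀ t₁ K) (lam : ℝ) (hlam : 0 ≤ lam)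
    (ψ : Polynomial ℝ) (hψdeg : ψ.natDegree ≤ r)
    (hψ : Gam t₀ t₁ r K lam ψ = Lop t₀ t₁ r K 1)
    (φ : Polynomial ℝ) (hφdeg : φ.natDegree ≤ r)
    (hφ : Polynomial.derivative φ - Polynomial.C lam * φ - LopE t₀ t₁ r K (φ.eval t₁)
      = Lop t₀ t₁ r K 1) :
    φ.eval t₀ = -ψ.eval t₀ := by
  obtain ⟨hdeg, hK1, hK0, horth⟩ := hK
  have hk : t₁ - t₀ ≠ 0 := sub_ne_zero.mpr (ne_of_gt ht)
  have hne : ∀ i, K i ≠ 0 := by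
    intro i h
    have := hK1 i
    rw [h] at this; simp at this
  have hψspan := span_K_aux K hdeg hne r ψ hψdeg
  have hφspan := span_K_aux K hdeg hne r φ hφdeg
  -- base identities for Lop
  have hLopBase : ∀ z : ℝ, ∀ j, j ≤ r →
      (∫ t in t₀..t₁, (Lop t₀ t₁ r K z).eval t * (K j).eval t) = z * (K j).eval t₀ := by
    intro z j hj
    rw [Lop, base_int t₀ t₁ ht r K horth z _ j hj, hK0 j]
    have h2j : (2 * (j : ℝ) + 1) ≠ 0 := by positivity
    field_simp
  have hLopEBase : ∀ z : ℝ, ∀ j, j ≤ r →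
      (∫ t in t₀..t₁, (LopE t₀ t₁ r K z).eval t * (K j).eval t) = z * (K j).eval t₁ := by
    intro z j hj
    rw [LopE, base_int t₀ t₁ ht r K horth z _ j hj, hK1 j]
    have h2j : (2 * (j : ℝ) + 1) ≠ 0 := by positivity
    field_simp
  have A1 : (∫ t in t₀..t₁, (Lop t₀ t₁ r K 1).eval t * φ.eval t) = 1 * φ.eval t₀ :=
    inner_eval t₀ t₁ r K _ 1 t₀ (hLopBase 1) φ hφspan
  have A2 : (∫ t in t₀..t₁, (Lop t₀ t₁ r K (ψ.eval t₀)).eval t * φ.eval t)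
      = ψ.eval t₀ * φ.eval t₀ :=
    inner_eval t₀ t₁ r K _ (ψ.eval t₀) t₀ (hLopBase _) φ hφspan
  have A3 : (∫ t in t₀..t₁, (LopE t₀ t₁ r K (φ.eval t₁)).eval t * ψ.eval t)
      = φ.eval t₁ * ψ.eval t₁ :=
    inner_eval t₀ t₁ r K _ (φ.eval t₁) t₁ (hLopEBase _) ψ hψspan
  have A4 : (∫ t in t₀..t₁, (Lop t₀ t₁ r K 1).eval t * ψ.eval t) = 1 * ψ.eval t₀ :=
    inner_eval t₀ t₁ r K _ 1 t₀ (hLopBase 1) ψ hψspan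
  -- equation E1 from hψ
  have E1 : (∫ t in t₀..t₁, (Polynomial.derivative ψ).eval t * φ.eval t)
      + ψ.eval t₀ * φ.eval t₀ + lam * (∫ t in t₀..t₁, ψ.eval t * φ.eval t)
      = φ.eval t₀ := by
    have hpt : ∀ t, (Lop t₀ t₁ r K 1).eval t * φ.eval t
        = (Polynomial.derivative ψ).eval t * φ.eval t
          + (Lop t₀ t₁ r K (ψ.eval t₀)).eval t * φ.eval t
          + lam * (ψ.eval t * φ.eval t) := by
      intro t
      have := congrArg (Polynomial.eval t) hψ
      simp only [Gam, eval_add, eval_mul, eval_C] at this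
      linear_combination (-(φ.eval t)) * this
    have := intervalIntegral.integral_congr (μ := volume) (a := t₀) (b := t₁)
      (g := fun t => (Polynomial.derivative ψ).eval t * φ.eval t
          + (Lop t₀ t₁ r K (ψ.eval t₀)).eval t * φ.eval t
          + lam * (ψ.eval t * φ.eval t)) (fun t _ => hpt t)
    rw [A1] at this
    rw [intervalIntegral.integral_add ((poly_ii _ _ _ _).add (poly_ii _ _ _ _))
        ((poly_ii ψ φ t₀ t₁).const_mul lam),
      intervalIntegral.integral_add (poly_ii _ _ _ _) (poly_ii _ _ _ _),
      intervalIntegral.integral_const_mul, A2] at this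
    linarith [this]
  -- equation E2 from hφ
  have E2 : (∫ t in t₀..t₁, (Polynomial.derivative φ).eval t * ψ.eval t)
      - lam * (∫ t in t₀..t₁, ψ.eval t * φ.eval t) - φ.eval t₁ * ψ.eval t₁
      = ψ.eval t₀ := by
    have hpt : ∀ t, (Lop t₀ t₁ r K 1).eval t * ψ.eval t
        = (Polynomial.derivative φ).eval t * ψ.eval t
          - lam * (ψ.eval t * φ.eval t)
          - (LopE t₀ t₁ r K (φ.eval t₁)).eval t * ψ.eval t := by
      intro t
      have := congrArg (Polynomial.eval t) hφ
      simp only [eval_sub, eval_mul, eval_C] at this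
      linear_combination (-(ψ.eval t)) * this
    have := intervalIntegral.integral_congr (μ := volume) (a := t₀) (b := t₁)
      (g := fun t => (Polynomial.derivative φ).eval t * ψ.eval t
          - lam * (ψ.eval t * φ.eval t)
          - (LopE t₀ t₁ r K (φ.eval t₁)).eval t * ψ.eval t) (fun t _ => hpt t)
    rw [A4] at this
    rw [intervalIntegral.integral_sub
        ((poly_ii _ _ _ _).sub ((poly_ii ψ φ t₀ t₁).const_mul lam)) (poly_ii _ _ _ _),
      intervalIntegral.integral_sub (poly_ii _ _ _ _) ((poly_ii ψ φ t₀ t₁).const_mul lam),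
      intervalIntegral.integral_const_mul, A3] at this
    linarith [this]
  -- FTC: E3
  have E3 : (∫ t in t₀..t₁, (Polynomial.derivative ψ).eval t * φ.eval t)
      + (∫ t in t₀..t₁, (Polynomial.derivative φ).eval t * ψ.eval t)
      = ψ.eval t₁ * φ.eval t₁ - ψ.eval t₀ * φ.eval t₀ := by
    have hFTC : (∫ t in t₀..t₁, (Polynomial.derivative (ψ * φ)).eval t)
        = (ψ * φ).eval t₁ - (ψ * φ).eval t₀ := by
      apply intervalIntegral.integral_eq_sub_of_hasDerivAt (f := fun t => (ψ * φ).eval t)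
      · intro x _; exact (ψ * φ).hasDerivAt x
      · exact (Polynomial.derivative (ψ * φ)).continuous.intervalIntegrable _ _
    have hpt : ∀ t, (Polynomial.derivative (ψ * φ)).eval t
        = (Polynomial.derivative ψ).eval t * φ.eval t
          + (Polynomial.derivative φ).eval t * ψ.eval t := by
      intro t
      rw [Polynomial.derivative_mul]
      simp
      ring
    rw [intervalIntegral.integral_congr (a := t₀) (b := t₁)
        (g := fun t => (Polynomial.derivative ψ).eval t * φ.eval t
          + (Polynomial.derivative φ).eval t * ψ.eval t) (fun t _ => hpt t),
      intervalIntegral.integral_add (poly_ii _ _ _ _) (poly_ii _ _ _ _)] at hFTC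
    simp only [eval_mul] at hFTC
    linarith [hFTC]
  linear_combination E3 - E1 - E2
end

section
/- Let λ > 0 and let φ ∈ P^r satisfy φ' − λ φ − L̂(φ(t₁)) = L(1) on I. Then the maximum of |φ| over the closed interval [t₀, t₁] is attained at the left endpoint, i.e. sup_{t∈[t₀,t₁]} |φ(t)| = |φ(t₀)|, and moreover −1 < φ(t₀) < 0. -/
open Polynomial MeasureTheory intervalIntegral

namespace Stmt4Aux

variable (t₀ t₁ : ℝ)

/-- Interval pairing of two polynomials. -/
noncomputable def ip (p q : Polynomial ℝ) : ℝ := ∫ t in t₀..t₁, p.eval t * q.eval t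

lemma ii (p : Polynomial ℝ) : IntervalIntegrable (fun t => p.eval t) volume t₀ t₁ :=
  (p.continuous_aeval).intervalIntegrable _ _

lemma ii2 (p q : Polynomial ℝ) :
    IntervalIntegrable (fun t => p.eval t * q.eval t) volume t₀ t₁ := by
  have := ii t₀ t₁ (p * q)
  simpa [Polynomial.eval_mul] using this

lemma integral_derivative (p : Polynomial ℝ) :
    ∫ t in t₀..t₁, (derivative p).eval t = p.eval t₁ - p.eval t₀ := by
  have h : ∀ x ∈ Set.uIcc t₀ t₁, DifferentiableAt ℝ (fun t => p.eval t) x :=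
    fun x _ => (p.hasDerivAt x).differentiableAt
  have h2 : IntervalIntegrable (deriv fun t => p.eval t) volume t₀ t₁ := by
    have : (deriv fun t => p.eval t) = fun t => (derivative p).eval t := by
      funext x; exact p.deriv
    rw [this]; exact ii t₀ t₁ _
  have := intervalIntegral.integral_deriv_eq_sub h h2
  rw [show (deriv fun t => p.eval t) = fun t => (derivative p).eval t from funext fun x => p.deriv] at this
  exact this

lemma ip_comm (p q : Polynomial ℝ) : ip t₀ t₁ p q = ip t₀ t₁ q p := by
  unfold ip; congr 1; funext t; ring

lemma ip_C_mul (c : ℝ) (p q : Polynomial ℝ) : ip t₀ t₁ (C c * p) q = c * ip t₀ t₁ p q := by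
  unfold ip
  rw [← intervalIntegral.integral_const_mul]
  congr 1; funext t; simp [Polynomial.eval_mul]; ring

lemma ip_add_left (p q s : Polynomial ℝ) :
    ip t₀ t₁ (p + q) s = ip t₀ t₁ p s + ip t₀ t₁ q s := by
  unfold ip
  rw [← intervalIntegral.integral_add (ii2 t₀ t₁ p s) (ii2 t₀ t₁ q s)]
  congr 1; funext t; simp [Polynomial.eval_add]; ring

lemma ip_sub_left (p q s : Polynomial ℝ) :
    ip t₀ t₁ (p - q) s = ip t₀ t₁ p s - ip t₀ t₁ q s := by
  unfold ip
  rw [← intervalIntegral.integral_sub (ii2 t₀ t₁ p s) (ii2 t₀ t₁ q s)]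
  congr 1; funext t; simp [Polynomial.eval_sub]; ring

lemma ip_sum_left {ι : Type*} (s : Finset ι) (f : ι → Polynomial ℝ) (q : Polynomial ℝ) :
    ip t₀ t₁ (∑ i ∈ s, f i) q = ∑ i ∈ s, ip t₀ t₁ (f i) q := by
  unfold ip
  rw [← intervalIntegral.integral_finset_sum (fun i _ => ii2 t₀ t₁ (f i) q)]
  congr 1; funext t
  rw [Polynomial.eval_finset_sum, Finset.sum_mul]


variable {K : ℕ → Polynomial ℝ}

/-- Any polynomial of degree ≤ m is a combination of `K 0, …, K m`. -/
lemma exists_expansion (hdeg : ∀ i, (K i).natDegree = i) (hne : ∀ i, K i ≠ 0) :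
    ∀ (m : ℕ) (p : Polynomial ℝ), p.natDegree ≤ m →
      ∃ c : ℕ → ℝ, p = ∑ i ∈ Finset.range (m + 1), C (c i) * K i := by
  intro m
  induction m with
  | zero =>
    intro p hp
    obtain ⟨a, ha⟩ := Polynomial.natDegree_eq_zero.mp (Nat.le_zero.mp hp)
    obtain ⟨b, hb⟩ := Polynomial.natDegree_eq_zero.mp (hdeg 0)
    have hb0 : b ≠ 0 := fun h => hne 0 (by rw [← hb, h, map_zero])
    exact ⟨fun _ => a / b, by simp [← ha, ← hb, ← Polynomial.C_mul, div_mul_cancel₀ a hb0]⟩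
  | succ m IH =>
    intro p hp
    set b := (K (m + 1)).coeff (m + 1) with hbdef
    have hb0 : b ≠ 0 := by
      have : (K (m + 1)).leadingCoeff ≠ 0 := leadingCoeff_ne_zero.mpr (hne _)
      rwa [Polynomial.leadingCoeff, hdeg (m + 1)] at this
    set d := p.coeff (m + 1) / b with hddef
    set q := p - C d * K (m + 1) with hqdef
    have hq : q.natDegree ≤ m := by
      rw [Polynomial.natDegree_le_iff_coeff_eq_zero]
      intro N hN
      rcases eq_or_lt_of_le (Nat.succ_le_of_lt hN) with h | h
      · rw [hqdef]
        simp only [Polynomial.coeff_sub, Polynomial.coeff_C_mul]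
        rw [← h, hddef, div_mul_cancel₀ _ hb0, sub_self]
      · rw [hqdef]
        simp only [Polynomial.coeff_sub, Polynomial.coeff_C_mul]
        rw [Polynomial.coeff_eq_zero_of_natDegree_lt (lt_of_le_of_lt hp h),
          Polynomial.coeff_eq_zero_of_natDegree_lt (by rw [hdeg]; exact h),
          mul_zero, sub_self]
    obtain ⟨c, hc⟩ := IH q hq
    refine ⟨Function.update c (m + 1) d, ?_⟩
    rw [Finset.sum_range_succ, Function.update_self]
    have : ∑ i ∈ Finset.range (m + 1), C (Function.update c (m + 1) d i) * K i
        = ∑ i ∈ Finset.range (m + 1), C (c i) * K i := by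
      refine Finset.sum_congr rfl fun i hi => ?_
      have : i ≠ m + 1 := by simp only [Finset.mem_range] at hi; omega
      rw [Function.update_of_ne this]
    rw [this, ← hc, hqdef]; ring

/-- Pairing of an expanded polynomial with `K j`. -/
lemma ip_expand (horth : ∀ i j, (∫ t in t₀..t₁, (K i).eval t * (K j).eval t) =
      if i = j then (t₁ - t₀) / (2 * (i : ℝ) + 1) else 0)
    (m : ℕ) (c : ℕ → ℝ) (j : ℕ) :
    ip t₀ t₁ (∑ i ∈ Finset.range (m + 1), C (c i) * K i) (K j)
      = if j ∈ Finset.range (m + 1) then c j * ((t₁ - t₀) / (2 * (j : ℝ) + 1)) else 0 := by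
  rw [ip_sum_left]
  have : ∀ i ∈ Finset.range (m + 1),
      ip t₀ t₁ (C (c i) * K i) (K j)
        = if i = j then c i * ((t₁ - t₀) / (2 * (i : ℝ) + 1)) else 0 := by
    intro i _
    rw [ip_C_mul]
    unfold ip
    rw [horth i j]
    split_ifs <;> simp
  rw [Finset.sum_congr rfl this]
  have := Finset.sum_ite_eq' (Finset.range (m + 1)) j
    (fun i => c i * ((t₁ - t₀) / (2 * (i : ℝ) + 1)))
  rw [← this]



lemma ip_parts (p q : Polynomial ℝ) :
    ip t₀ t₁ (derivative p) q + ip t₀ t₁ p (derivative q)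
      = p.eval t₁ * q.eval t₁ - p.eval t₀ * q.eval t₀ := by
  have h := integral_derivative t₀ t₁ (p * q)
  rw [Polynomial.derivative_mul] at h
  have h2 : ∫ t in t₀..t₁, (derivative p * q + p * derivative q).eval t
      = ip t₀ t₁ (derivative p) q + ip t₀ t₁ p (derivative q) := by
    unfold ip
    rw [← intervalIntegral.integral_add (ii2 t₀ t₁ _ _) (ii2 t₀ t₁ _ _)]
    congr 1; funext t; simp [Polynomial.eval_add, Polynomial.eval_mul]
  rw [h2] at h
  simpa [Polynomial.eval_mul] using h

variable (ht : t₀ < t₁) (hdeg : ∀ i, (K i).natDegree = i) (hne : ∀ i, K i ≠ 0)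
variable (horth : ∀ i j, (∫ t in t₀..t₁, (K i).eval t * (K j).eval t) =
      if i = j then (t₁ - t₀) / (2 * (i : ℝ) + 1) else 0)
variable (hKt₀ : ∀ i, (K i).eval t₀ = (-1 : ℝ) ^ i) (hKt₁ : ∀ i, (K i).eval t₁ = 1)

include ht hdeg hne horth hKt₀ in
lemma ip_Lop (r : ℕ) (z : ℝ) (V : Polynomial ℝ) (hV : V.natDegree ≤ r) :
    ip t₀ t₁ (Lop t₀ t₁ r K z) V = z * V.eval t₀ := by
  obtain ⟨c, hc⟩ := exists_expansion hdeg hne r V hV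
  have hk : t₁ - t₀ ≠ 0 := sub_ne_zero.mpr (ne_of_gt ht)
  have key : ∀ i ∈ Finset.range (r + 1),
      ip t₀ t₁ (C ((-1 : ℝ) ^ i * (2 * (i : ℝ) + 1)) * K i) V
        = (t₁ - t₀) * ((-1 : ℝ) ^ i * c i) := by
    intro i hi
    rw [ip_C_mul, ip_comm, hc, ip_expand t₀ t₁ horth, if_pos hi]
    have h2 : (2 * (i : ℝ) + 1) ≠ 0 := by positivity
    field_simp
  unfold Lop
  rw [ip_C_mul, ip_sum_left, Finset.sum_congr rfl key, ← Finset.mul_sum]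
  have hV0 : V.eval t₀ = ∑ i ∈ Finset.range (r + 1), (-1 : ℝ) ^ i * c i := by
    rw [hc, Polynomial.eval_finset_sum]
    refine Finset.sum_congr rfl fun i _ => ?_
    simp [hKt₀ i]; ring
  rw [hV0]
  field_simp

include ht hdeg hne horth hKt₁ in
lemma ip_LopE (r : ℕ) (z : ℝ) (V : Polynomial ℝ) (hV : V.natDegree ≤ r) :
    ip t₀ t₁ (LopE t₀ t₁ r K z) V = z * V.eval t₁ := by
  obtain ⟨c, hc⟩ := exists_expansion hdeg hne r V hV
  have hk : t₁ - t₀ ≠ 0 := sub_ne_zero.mpr (ne_of_gt ht)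
  have key : ∀ i ∈ Finset.range (r + 1),
      ip t₀ t₁ (C (2 * (i : ℝ) + 1) * K i) V = (t₁ - t₀) * c i := by
    intro i hi
    rw [ip_C_mul, ip_comm, hc, ip_expand t₀ t₁ horth, if_pos hi]
    have h2 : (2 * (i : ℝ) + 1) ≠ 0 := by positivity
    field_simp
  unfold LopE
  rw [ip_C_mul, ip_sum_left, Finset.sum_congr rfl key, ← Finset.mul_sum]
  have hV1 : V.eval t₁ = ∑ i ∈ Finset.range (r + 1), c i := by
    rw [hc, Polynomial.eval_finset_sum]
    refine Finset.sum_congr rfl fun i _ => ?_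
    simp [hKt₁ i]
  rw [hV1]
  field_simp



include ht hdeg hne horth hKt₀ hKt₁ in
lemma weak_identity (r : ℕ) (lam : ℝ) (φ : Polynomial ℝ)
    (hφ : derivative φ - C lam * φ - LopE t₀ t₁ r K (φ.eval t₁) = Lop t₀ t₁ r K 1)
    (j : ℕ) (V : Polynomial ℝ) (hVdeg : V.natDegree ≤ r)
    (hVode : derivative V + C lam * V = K j) :
    ip t₀ t₁ φ (K j) = -(1 + φ.eval t₀) * V.eval t₀ := by
  have h := congrArg (fun p => ip t₀ t₁ p V) hφ
  simp only [ip_sub_left] at h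
  rw [ip_Lop t₀ t₁ ht hdeg hne horth hKt₀ r 1 V hVdeg,
      ip_LopE t₀ t₁ ht hdeg hne horth hKt₁ r _ V hVdeg, ip_C_mul] at h
  have hparts := ip_parts t₀ t₁ φ V
  have hd : ip t₀ t₁ φ (derivative V) = ip t₀ t₁ φ (K j) - lam * ip t₀ t₁ φ V := by
    have hV' : derivative V = K j - C lam * V := by rw [← hVode]; ring
    rw [ip_comm t₀ t₁ φ (derivative V), hV', ip_sub_left, ip_C_mul,
      ip_comm t₀ t₁ (K j) φ, ip_comm t₀ t₁ V φ]
  have hD := ip_comm t₀ t₁ (derivative φ) V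
  linear_combination hparts - hd - h

/-- The weight `(t - t₀)(t₁ - t)` in expanded form. -/
noncomputable def w : Polynomial ℝ := C (t₀ + t₁) * X - X ^ 2 - C (t₀ * t₁)

/-- The derivative of the weight. -/
noncomputable def wd : Polynomial ℝ := C (t₀ + t₁) - C 2 * X

lemma w_deriv : derivative (w t₀ t₁) = wd t₀ t₁ := by
  unfold w wd
  simp
  rw [one_add_one_eq_two]; exact (map_ofNat C 2).symm

lemma wd_deriv : derivative (wd t₀ t₁) = - C 2 := by
  unfold wd; simp

lemma w_eval (x : ℝ) : (w t₀ t₁).eval x = (x - t₀) * (t₁ - x) := by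
  unfold w; simp; ring

lemma wd_eval (x : ℝ) : (wd t₀ t₁).eval x = (t₀ + t₁) - 2 * x := by
  unfold wd; simp

lemma w_natDegree_le : (w t₀ t₁).natDegree ≤ 2 := by
  unfold w
  compute_degree

lemma natDegree_dwd (p : Polynomial ℝ) :
    (derivative (w t₀ t₁ * derivative p)).natDegree ≤ p.natDegree := by
  by_cases hp : derivative p = 0
  · simp [hp]
  · have h1 : p.natDegree ≠ 0 := by
      intro h
      obtain ⟨a, ha⟩ := Polynomial.natDegree_eq_zero.mp h
      exact hp (by rw [← ha]; simp)
    have h2 := Polynomial.natDegree_mul_le (p := w t₀ t₁) (q := derivative p)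
    have h3 := Polynomial.natDegree_derivative_le p
    have h4 := Polynomial.natDegree_derivative_le (w t₀ t₁ * derivative p)
    have h5 := w_natDegree_le t₀ t₁
    omega

lemma ip_w_symm (a b : Polynomial ℝ) :
    ip t₀ t₁ (w t₀ t₁ * a) b = ip t₀ t₁ (w t₀ t₁ * b) a := by
  unfold ip; congr 1; funext t; simp [Polynomial.eval_mul]; ring

lemma ip_dwd (p q : Polynomial ℝ) :
    ip t₀ t₁ (derivative (w t₀ t₁ * derivative p)) q
      = - ip t₀ t₁ (w t₀ t₁ * derivative p) (derivative q) := by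
  have h := ip_parts t₀ t₁ (w t₀ t₁ * derivative p) q
  simp only [Polynomial.eval_mul, w_eval] at h
  rw [show (t₁ - t₀) * (t₁ - t₁) = 0 by ring, show (t₀ - t₀) * (t₁ - t₀) = 0 by ring] at h
  simp only [zero_mul, mul_zero, sub_zero] at h
  linarith

lemma ip_dwd_symm (p q : Polynomial ℝ) :
    ip t₀ t₁ (derivative (w t₀ t₁ * derivative p)) q
      = ip t₀ t₁ (derivative (w t₀ t₁ * derivative q)) p := by
  rw [ip_dwd t₀ t₁, ip_dwd t₀ t₁, ip_w_symm]


include ht hdeg hne horth in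
lemma K_ode (j : ℕ) :
    derivative (w t₀ t₁ * derivative (K j)) = C (-((j : ℝ) * ((j : ℝ) + 1))) * K j := by
  have hk : t₁ - t₀ ≠ 0 := sub_ne_zero.mpr (ne_of_gt ht)
  set Q := derivative (w t₀ t₁ * derivative (K j)) + C ((j : ℝ) * ((j : ℝ) + 1)) * K j with hQ
  have hQdeg : Q.natDegree ≤ j := by
    have h1 := natDegree_dwd t₀ t₁ (K j)
    have h2 := Polynomial.natDegree_C_mul_le ((j : ℝ) * ((j : ℝ) + 1)) (K j)
    have h3 := Polynomial.natDegree_add_le (derivative (w t₀ t₁ * derivative (K j)))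
      (C ((j : ℝ) * ((j : ℝ) + 1)) * K j)
    rw [hdeg j] at h1 h2
    rw [hQ]
    omega
  obtain ⟨c, hc⟩ := exists_expansion hdeg hne j Q hQdeg
  -- coefficients below the top vanish by orthogonality
  have hcoefflow : ∀ i, i < j → c i = 0 := by
    intro i hij
    have h1 : ip t₀ t₁ Q (K i) = c i * ((t₁ - t₀) / (2 * (i : ℝ) + 1)) := by
      rw [hc, ip_expand t₀ t₁ horth, if_pos (Finset.mem_range.mpr (by omega))]
    have h2 : ip t₀ t₁ Q (K i) = 0 := by
      rw [hQ, ip_add_left, ip_C_mul]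
      have ha : ip t₀ t₁ (K j) (K i) = 0 := by
        unfold ip; rw [horth j i, if_neg (by omega)]
      have hb : ip t₀ t₁ (derivative (w t₀ t₁ * derivative (K i))) (K j) = 0 := by
        have hRdeg : (derivative (w t₀ t₁ * derivative (K i))).natDegree ≤ i := by
          have := natDegree_dwd t₀ t₁ (K i); rwa [hdeg i] at this
        obtain ⟨e, he⟩ := exists_expansion hdeg hne i _ hRdeg
        rw [he, ip_expand t₀ t₁ horth, if_neg (by simp; omega)]
      rw [ip_dwd_symm t₀ t₁, hb, ha, mul_zero, add_zero]
    rw [h1] at h2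
    have : (t₁ - t₀) / (2 * (i : ℝ) + 1) ≠ 0 := by
      apply div_ne_zero hk; positivity
    exact (mul_eq_zero.mp h2).resolve_right this
  -- the top coefficient vanishes by a leading-coefficient computation
  have hcoefftop : Q.coeff j = 0 := by
    rcases Nat.eq_zero_or_pos j with hj | hj
    · subst hj
      obtain ⟨a, ha⟩ := Polynomial.natDegree_eq_zero.mp (hdeg 0)
      rw [hQ, ← ha]
      simp
    · obtain ⟨m, rfl⟩ : ∃ m, j = m + 1 := ⟨j - 1, by omega⟩
      have e1 : (w t₀ t₁ * derivative (K (m + 1))).coeff (m + 2)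
          = -((K (m + 1)).coeff (m + 1) * ((m : ℝ) + 1)) := by
        unfold w
        rw [sub_mul, sub_mul, Polynomial.coeff_sub, Polynomial.coeff_sub]
        rw [mul_assoc, Polynomial.coeff_C_mul]
        have hx1 : (X * derivative (K (m + 1))).coeff (m + 2)
            = (derivative (K (m + 1))).coeff (m + 1) := Polynomial.coeff_X_mul _ _
        have hx2 : (X ^ 2 * derivative (K (m + 1))).coeff (m + 2)
            = (derivative (K (m + 1))).coeff m := by
          have := Polynomial.coeff_X_pow_mul (derivative (K (m + 1))) 2 m
          simpa [show m + 2 = m + 2 from rfl] using this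
        have hz : ∀ n, m + 1 < n → (K (m + 1)).coeff n = 0 := fun n hn =>
          Polynomial.coeff_eq_zero_of_natDegree_lt (by rw [hdeg]; omega)
        rw [hx1, hx2, Polynomial.coeff_C_mul]
        simp only [Polynomial.coeff_derivative]
        rw [hz (m + 1 + 1) (by omega), hz (m + 2 + 1) (by omega)]
        push_cast
        ring
      have e2 : Q.coeff (m + 1)
          = (derivative (w t₀ t₁ * derivative (K (m + 1)))).coeff (m + 1)
            + ((m : ℝ) + 1) * ((m : ℝ) + 2) * (K (m + 1)).coeff (m + 1) := by
        rw [hQ, Polynomial.coeff_add, Polynomial.coeff_C_mul]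
        push_cast
        ring
      rw [e2, Polynomial.coeff_derivative, e1]
      push_cast
      ring
  -- conclude Q = 0
  have hcall : ∀ i ∈ Finset.range (j + 1), c i = 0 := by
    intro i hi
    rcases Nat.lt_or_ge i j with h | h
    · exact hcoefflow i h
    · have : i = j := by simp at hi; omega
      subst this
      have h1 : Q.coeff i = c i * (K i).coeff i := by
        rw [hc, Polynomial.finset_sum_coeff, Finset.sum_eq_single i]
        · rw [Polynomial.coeff_C_mul]
        · intro b hb hbne
          rw [Polynomial.coeff_C_mul]
          rcases Nat.lt_or_ge b i with hbl | hbg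
          · rw [Polynomial.coeff_eq_zero_of_natDegree_lt (by rw [hdeg]; omega), mul_zero]
          · simp at hb; omega
        · intro hni; simp at hni
      have h2 : (K i).coeff i ≠ 0 := by
        have : (K i).leadingCoeff ≠ 0 := Polynomial.leadingCoeff_ne_zero.mpr (hne i)
        rwa [Polynomial.leadingCoeff, hdeg i] at this
      rw [hcoefftop] at h1
      exact ((mul_eq_zero.mp h1.symm).resolve_right h2)
  have hQ0 : Q = 0 := by
    rw [hc]
    apply Finset.sum_eq_zero
    intro i hi
    rw [hcall i hi]
    simp
  have h0 : derivative (w t₀ t₁ * derivative (K j)) + C ((j : ℝ) * ((j : ℝ) + 1)) * K j = 0 := by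
    rw [← hQ]; exact hQ0
  rw [map_neg, neg_mul]
  linear_combination h0


include ht hdeg hne horth hKt₀ hKt₁ in
lemma K_bound (i : ℕ) (t : ℝ) (htm : t ∈ Set.Icc t₀ t₁) : |(K i).eval t| ≤ 1 := by
  rcases Nat.eq_zero_or_pos i with hi | hi
  · subst hi
    obtain ⟨a, ha⟩ := Polynomial.natDegree_eq_zero.mp (hdeg 0)
    have ha1 : a = 1 := by rw [← hKt₁ 0, ← ha]; simp
    rw [← ha, ha1]; simp
  · set α : ℝ := (i : ℝ) * ((i : ℝ) + 1) with hα
    have hi1 : (1 : ℝ) ≤ (i : ℝ) := by exact_mod_cast hi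
    have hαpos : 0 < α := by rw [hα]; nlinarith
    set P := C α * (K i) ^ 2 + w t₀ t₁ * (derivative (K i)) ^ 2 with hP
    have hrel : wd t₀ t₁ * derivative (K i) + w t₀ t₁ * derivative (derivative (K i))
        = - (C α * K i) := by
      have hode := K_ode t₀ t₁ ht hdeg hne horth i
      rw [map_neg, neg_mul] at hode
      rw [Polynomial.derivative_mul, w_deriv] at hode
      linear_combination hode
    have hdP : derivative P = - (wd t₀ t₁ * (derivative (K i)) ^ 2) := by
      rw [hP]
      rw [Polynomial.derivative_add, Polynomial.derivative_mul, Polynomial.derivative_mul,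
        Polynomial.derivative_C, w_deriv, Polynomial.derivative_pow, Polynomial.derivative_pow]
      simp only [map_ofNat, Nat.cast_ofNat]
      push_cast
      linear_combination (2 * derivative (K i)) * hrel
    set f : ℝ → ℝ := fun x => P.eval x with hf
    have hfd : ∀ x : ℝ, deriv f x = -((wd t₀ t₁).eval x * ((derivative (K i)).eval x) ^ 2) := by
      intro x
      rw [hf]
      rw [Polynomial.deriv, hdP]
      simp [Polynomial.eval_mul]
    have hft₀ : f t₀ = α := by
      rw [hf]
      simp [hP, w_eval, hKt₀ i]
      have : ((-1 : ℝ) ^ i) ^ 2 = 1 := by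
        rw [← pow_mul, mul_comm, pow_mul]; simp
      rw [this, mul_one]
    have hft₁ : f t₁ = α := by
      rw [hf]
      simp [hP, w_eval, hKt₁ i]
    have hfle : f t ≤ α := by
      rcases le_or_gt t ((t₀ + t₁) / 2) with hc | hc
      · have hmono : AntitoneOn f (Set.Icc t₀ ((t₀ + t₁) / 2)) := by
          apply antitoneOn_of_deriv_nonpos (convex_Icc _ _)
            P.continuous.continuousOn P.differentiable.differentiableOn
          intro x hx
          rw [interior_Icc, Set.mem_Ioo] at hx
          rw [hfd x, wd_eval]
          have h1 : 0 ≤ (t₀ + t₁) - 2 * x := by linarith [hx.2]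
          have h2 : 0 ≤ ((derivative (K i)).eval x) ^ 2 := sq_nonneg _
          nlinarith
        have h1 : t₀ ∈ Set.Icc t₀ ((t₀ + t₁) / 2) := by
          constructor <;> [exact le_refl _; linarith]
        have h2 : t ∈ Set.Icc t₀ ((t₀ + t₁) / 2) := ⟨htm.1, hc⟩
        have := hmono h1 h2 htm.1
        rw [hft₀] at this
        exact this
      · have hmono : MonotoneOn f (Set.Icc ((t₀ + t₁) / 2) t₁) := by
          apply monotoneOn_of_deriv_nonneg (convex_Icc _ _)
            P.continuous.continuousOn P.differentiable.differentiableOn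
          intro x hx
          rw [interior_Icc, Set.mem_Ioo] at hx
          rw [hfd x, wd_eval]
          have h1 : (t₀ + t₁) - 2 * x ≤ 0 := by linarith [hx.1]
          have h2 : 0 ≤ ((derivative (K i)).eval x) ^ 2 := sq_nonneg _
          nlinarith
        have h1 : t₁ ∈ Set.Icc ((t₀ + t₁) / 2) t₁ := by
          constructor <;> [linarith; exact le_refl _]
        have h2 : t ∈ Set.Icc ((t₀ + t₁) / 2) t₁ := ⟨hc.le, htm.2⟩
        have := hmono h2 h1 htm.2
        rw [hft₁] at this
        exact this
    have hwnn : 0 ≤ (w t₀ t₁).eval t := by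
      rw [w_eval]
      have := htm.1; have := htm.2
      nlinarith
    have hfval : f t = α * ((K i).eval t) ^ 2 + (w t₀ t₁).eval t * ((derivative (K i)).eval t) ^ 2 := by
      rw [hf]; simp [hP, Polynomial.eval_mul]
    have hsq : ((K i).eval t) ^ 2 ≤ 1 := by
      have h2 : 0 ≤ ((derivative (K i)).eval t) ^ 2 := sq_nonneg _
      nlinarith [hfle, hfval]
    exact (sq_le_one_iff_abs_le_one _).mp hsq



include ht hdeg hne horth in
lemma K_iter_ode (j : ℕ) : ∀ n : ℕ,
    w t₀ t₁ * derivative^[n + 2] (K j) + C ((n : ℝ) + 1) * (wd t₀ t₁ * derivative^[n + 1] (K j))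
      = C ((n : ℝ) * ((n : ℝ) + 1) - (j : ℝ) * ((j : ℝ) + 1)) * derivative^[n] (K j) := by
  have hD : ∀ m : ℕ, derivative (derivative^[m] (K j)) = derivative^[m + 1] (K j) :=
    fun m => (Function.iterate_succ_apply' _ _ _).symm
  intro n
  induction n with
  | zero =>
    have hode := K_ode t₀ t₁ ht hdeg hne horth j
    rw [Polynomial.derivative_mul, w_deriv] at hode
    rw [show derivative (K j) = derivative^[1] (K j) from rfl, hD 1] at hode
    simp only [map_add, map_sub, map_mul, map_one, map_zero, map_neg, Nat.cast_zero]
      at hode ⊢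
    simp only [Function.iterate_zero_apply]
    linear_combination hode
  | succ n IH =>
    have hstep := congrArg derivative IH
    simp only [Polynomial.derivative_add, Polynomial.derivative_mul, Polynomial.derivative_C,
      Polynomial.derivative_one, w_deriv, wd_deriv, hD] at hstep
    rw [show n + 2 + 1 = n + 1 + 2 from rfl] at hstep
    push_cast at hstep ⊢
    simp only [map_add, map_sub, map_mul, map_one, map_ofNat] at hstep ⊢
    linear_combination hstep

include ht hdeg hne horth hKt₀ in
lemma K_deriv_sign (j : ℕ) : ∀ n : ℕ, n ≤ j →
    0 < (-1 : ℝ) ^ (j + n) * (derivative^[n] (K j)).eval t₀ := by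
  intro n
  induction n with
  | zero =>
    intro _
    simp only [Nat.add_zero, Function.iterate_zero_apply]
    rw [hKt₀ j, ← mul_pow]
    norm_num
  | succ n IH =>
    intro hnj
    have IH' := IH (by omega)
    have hrec := congrArg (Polynomial.eval t₀) (K_iter_ode t₀ t₁ ht hdeg hne horth j n)
    simp only [Polynomial.eval_add, Polynomial.eval_mul, Polynomial.eval_C, w_eval, wd_eval]
      at hrec
    rw [show (t₀ - t₀) * (t₁ - t₀) = 0 by ring] at hrec
    have hneg : (n : ℝ) * ((n : ℝ) + 1) - (j : ℝ) * ((j : ℝ) + 1) < 0 := by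
      have h4 : (n : ℝ) < (j : ℝ) := by exact_mod_cast (by omega : n < j)
      nlinarith [Nat.cast_nonneg (α := ℝ) n]
    have h2 : ((n : ℝ) * ((n : ℝ) + 1) - (j : ℝ) * ((j : ℝ) + 1))
        * ((-1 : ℝ) ^ (j + n) * (derivative^[n] (K j)).eval t₀) < 0 :=
      mul_neg_of_neg_of_pos hneg IH'
    have h1 : ((n : ℝ) + 1) * ((t₀ + t₁) - 2 * t₀)
        * ((-1 : ℝ) ^ (j + n) * (derivative^[n + 1] (K j)).eval t₀)
        = ((n : ℝ) * ((n : ℝ) + 1) - (j : ℝ) * ((j : ℝ) + 1))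
          * ((-1 : ℝ) ^ (j + n) * (derivative^[n] (K j)).eval t₀) := by
      linear_combination ((-1 : ℝ) ^ (j + n)) * hrec
    have hpos : (0 : ℝ) < ((n : ℝ) + 1) * ((t₀ + t₁) - 2 * t₀) := by
      have : (0 : ℝ) < (t₀ + t₁) - 2 * t₀ := by linarith
      positivity
    have h3 : (-1 : ℝ) ^ (j + n) * (derivative^[n + 1] (K j)).eval t₀ < 0 := by
      by_contra h
      push_neg at h
      nlinarith [mul_nonneg hpos.le h]
    rw [show j + (n + 1) = (j + n) + 1 from rfl, pow_succ]
    nlinarith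

/-- Polynomial solution of `V' + λ V = K j`. -/
noncomputable def Vp (lam : ℝ) (K : ℕ → Polynomial ℝ) (j : ℕ) : Polynomial ℝ :=
  ∑ n ∈ Finset.range (j + 1), C ((-1 : ℝ) ^ n * lam⁻¹ ^ (n + 1)) * derivative^[n] (K j)

include hdeg in
lemma Vp_natDegree_le (lam : ℝ) (j : ℕ) : (Vp lam K j).natDegree ≤ j := by
  apply Polynomial.natDegree_sum_le_of_forall_le
  intro n _
  have h1 := Polynomial.natDegree_C_mul_le ((-1 : ℝ) ^ n * lam⁻¹ ^ (n + 1))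
    (derivative^[n] (K j))
  have h2 := Polynomial.natDegree_iterate_derivative (K j) n
  rw [hdeg j] at h2
  omega

include hdeg in
lemma Vp_ode (lam : ℝ) (hlam : lam ≠ 0) (j : ℕ) :
    derivative (Vp lam K j) + C lam * Vp lam K j = K j := by
  have hCl : C lam * C lam⁻¹ = (1 : Polynomial ℝ) := by
    rw [← map_mul, mul_inv_cancel₀ hlam, map_one]
  unfold Vp
  rw [map_sum, Finset.mul_sum, ← Finset.sum_add_distrib]
  have key : ∀ n ∈ Finset.range (j + 1),
      derivative (C ((-1 : ℝ) ^ n * lam⁻¹ ^ (n + 1)) * derivative^[n] (K j))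
        + C lam * (C ((-1 : ℝ) ^ n * lam⁻¹ ^ (n + 1)) * derivative^[n] (K j))
      = (C ((-1 : ℝ) ^ n * lam⁻¹ ^ n) * derivative^[n] (K j))
        - (C ((-1 : ℝ) ^ (n + 1) * lam⁻¹ ^ (n + 1)) * derivative^[n + 1] (K j)) := by
    intro n _
    rw [Polynomial.derivative_C_mul,
      show derivative (derivative^[n] (K j)) = derivative^[n + 1] (K j) from
        (Function.iterate_succ_apply' _ _ _).symm]
    simp only [map_mul, map_pow, map_neg, map_one]
    linear_combination ((-1 : Polynomial ℝ) ^ n * (C lam⁻¹) ^ n * derivative^[n] (K j)) * hCl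
  rw [Finset.sum_congr rfl key,
    Finset.sum_range_sub' (fun n => C ((-1 : ℝ) ^ n * lam⁻¹ ^ n) * derivative^[n] (K j)) (j + 1)]
  have hz : derivative^[j + 1] (K j) = 0 :=
    Polynomial.iterate_derivative_eq_zero (by rw [hdeg j]; omega)
  rw [hz]
  simp

end Stmt4Aux

/-- Stability of the dG dual solution: `max_{[t₀,t₁]} |φ| = |φ(t₀)|` and `-1 < φ(t₀) < 0`. -/
theorem stmt_4 (t₀ t₁ : ℝ) (ht : t₀ < t₁) (r : ℕ) (K : ℕ → Polynomial ℝ)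
    (hK : IsLegendreBasis t₀ t₁ K) (lam : ℝ) (hlam : 0 < lam)
    (φ : Polynomial ℝ) (hφdeg : φ.natDegree ≤ r)
    (hφ : Polynomial.derivative φ - Polynomial.C lam * φ - LopE t₀ t₁ r K (φ.eval t₁)
      = Lop t₀ t₁ r K 1) :
    IsGreatest ((fun t => |φ.eval t|) '' Set.Icc t₀ t₁) |φ.eval t₀| ∧
    (-1 < φ.eval t₀ ∧ φ.eval t₀ < 0) := by
  obtain ⟨hdeg, hKt₁, hKt₀, horth⟩ := hK
  have hne : ∀ i, K i ≠ 0 := by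
    intro i h
    have h1 := hKt₁ i
    rw [h] at h1
    simp at h1
  have hk : 0 < t₁ - t₀ := sub_pos.mpr ht
  obtain ⟨a, ha⟩ := Stmt4Aux.exists_expansion hdeg hne r φ hφdeg
  set c : ℝ := -(1 + φ.eval t₀) with hc
  set W : ℕ → ℝ := fun j => (-1 : ℝ) ^ j * (Stmt4Aux.Vp lam K j).eval t₀ with hW
  set Q : ℕ → ℝ := fun j => (2 * (j : ℝ) + 1) / (t₁ - t₀) with hQ
  have hQpos : ∀ j, 0 < Q j := by
    intro j
    rw [hQ]
    have : (0:ℝ) < 2 * (j : ℝ) + 1 := by positivity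
    exact div_pos this hk
  have hWpos : ∀ j, 0 < W j := by
    intro j
    rw [hW]
    simp only
    unfold Stmt4Aux.Vp
    rw [Polynomial.eval_finset_sum, Finset.mul_sum]
    apply Finset.sum_pos
    · intro n hn
      simp only [Polynomial.eval_mul, Polynomial.eval_C]
      have hsign := Stmt4Aux.K_deriv_sign t₀ t₁ ht hdeg hne horth hKt₀ j n
        (by simp only [Finset.mem_range] at hn; omega)
      have hpow : (0:ℝ) < lam⁻¹ ^ (n + 1) := by positivity
      have heq : (-1:ℝ) ^ j * ((-1:ℝ) ^ n * lam⁻¹ ^ (n + 1) * (derivative^[n] (K j)).eval t₀)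
          = lam⁻¹ ^ (n + 1) * ((-1:ℝ) ^ (j + n) * (derivative^[n] (K j)).eval t₀) := by
        rw [pow_add]; ring
      rw [heq]
      exact mul_pos hpow hsign
    · exact ⟨0, Finset.mem_range.mpr (by omega)⟩
  have haj : ∀ j ∈ Finset.range (r + 1), a j = c * ((-1 : ℝ) ^ j * (W j * Q j)) := by
    intro j hj
    have hVpe : (Stmt4Aux.Vp lam K j).eval t₀ = (-1 : ℝ) ^ j * W j := by
      rw [hW]
      simp only
      rw [← mul_assoc, ← mul_pow]
      norm_num
    have h1 : Stmt4Aux.ip t₀ t₁ φ (K j) = c * ((-1 : ℝ) ^ j * W j) := by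
      have h2 := Stmt4Aux.weak_identity t₀ t₁ ht hdeg hne horth hKt₀ hKt₁ r lam φ hφ j
        (Stmt4Aux.Vp lam K j)
        (le_trans (Stmt4Aux.Vp_natDegree_le hdeg lam j)
          (by simp only [Finset.mem_range] at hj; omega))
        (Stmt4Aux.Vp_ode hdeg lam (ne_of_gt hlam) j)
      rw [h2, hVpe, hc]
    have h2 : Stmt4Aux.ip t₀ t₁ φ (K j) = a j * ((t₁ - t₀) / (2 * (j : ℝ) + 1)) := by
      rw [ha, Stmt4Aux.ip_expand t₀ t₁ horth, if_pos hj]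
    have h3 := h2.symm.trans h1
    have hq2 : (0:ℝ) < 2 * (j : ℝ) + 1 := by positivity
    rw [hQ]
    field_simp at h3 ⊢
    linarith [h3]
  set T : ℝ := ∑ i ∈ Finset.range (r + 1), W i * Q i with hT
  have hTpos : 0 < T := by
    rw [hT]
    exact Finset.sum_pos (fun i _ => mul_pos (hWpos i) (hQpos i))
      ⟨0, Finset.mem_range.mpr (by omega)⟩
  have heval : φ.eval t₀ = c * T := by
    have h4 := congrArg (Polynomial.eval t₀) ha
    rw [Polynomial.eval_finset_sum] at h4
    have hterm : ∀ i ∈ Finset.range (r + 1),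
        (C (a i) * K i).eval t₀ = c * (W i * Q i) := by
      intro i hi
      rw [Polynomial.eval_mul, Polynomial.eval_C, hKt₀ i, haj i hi]
      have hp : (-1:ℝ) ^ i * (-1:ℝ) ^ i = 1 := by rw [← mul_pow]; norm_num
      linear_combination (c * (W i * Q i)) * hp
    rw [Finset.sum_congr rfl hterm, ← Finset.mul_sum] at h4
    rw [h4, hT]
  have hcT : c * (1 + T) = -1 := by linear_combination hc - heval
  have hcneg : c < 0 := by nlinarith
  have hcgt : -1 < c := by nlinarith
  have hφ0 : φ.eval t₀ = -1 - c := by rw [heval]; linear_combination hcT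
  have hφ0neg : φ.eval t₀ < 0 := by rw [hφ0]; linarith
  have hub : ∀ t ∈ Set.Icc t₀ t₁, |φ.eval t| ≤ |φ.eval t₀| := by
    intro t htm
    have h6 : φ.eval t = ∑ i ∈ Finset.range (r + 1), (C (a i) * K i).eval t := by
      rw [← Polynomial.eval_finset_sum, ← ha]
    have h7 : ∀ i ∈ Finset.range (r + 1),
        |(C (a i) * K i).eval t| ≤ (-c) * (W i * Q i) := by
      intro i hi
      have h8 : |a i| = (-c) * (W i * Q i) := by
        rw [haj i hi]
        simp only [abs_mul, abs_pow, abs_neg, abs_one, one_pow, one_mul,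
          abs_of_neg hcneg, abs_of_pos (hWpos i), abs_of_pos (hQpos i)]
      calc |(C (a i) * K i).eval t| = |a i| * |(K i).eval t| := by
            rw [Polynomial.eval_mul, Polynomial.eval_C, abs_mul]
        _ ≤ |a i| * 1 := mul_le_mul_of_nonneg_left
            (Stmt4Aux.K_bound t₀ t₁ ht hdeg hne horth hKt₀ hKt₁ i t htm) (abs_nonneg _)
        _ = (-c) * (W i * Q i) := by rw [mul_one, h8]
    calc |φ.eval t| ≤ ∑ i ∈ Finset.range (r + 1), |(C (a i) * K i).eval t| := by
          rw [h6]; exact Finset.abs_sum_le_sum_abs _ _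
      _ ≤ ∑ i ∈ Finset.range (r + 1), (-c) * (W i * Q i) := Finset.sum_le_sum h7
      _ = (-c) * T := by rw [hT, ← Finset.mul_sum]
      _ = |φ.eval t₀| := by
          rw [heval, abs_of_neg (by nlinarith : c * T < 0)]
          ring
  refine ⟨⟨⟨t₀, ⟨le_refl t₀, le_of_lt ht⟩, rfl⟩, ?_⟩, ?_, hφ0neg⟩
  · rintro y ⟨t, htm, rfl⟩
    exact hub t htm
  · rw [hφ0]; linarith
end

section
/- Let λ > 0 and let φ ∈ P^r satisfy φ' − λ φ − L̂(φ(t₁)) = L(1) on I. Then the identity 2λ ∫_I φ(t)² dt + φ(t₁)² = −φ(t₀)(2 + φ(t₀)) holds. -/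
open Polynomial MeasureTheory intervalIntegral

lemma poly_mem_span (t₁ : ℝ) (K : ℕ → Polynomial ℝ)
    (hdeg : ∀ i, (K i).natDegree = i) (h1 : ∀ i, (K i).eval t₁ = 1) :
    ∀ n : ℕ, ∀ φ : Polynomial ℝ, φ.natDegree ≤ n →
      φ ∈ Submodule.span ℝ (K '' Set.Iic n) := by
  intro n
  induction n with
  | zero =>
    intro φ hφ
    have hK0 : K 0 = 1 := by
      have h := Polynomial.eq_C_of_natDegree_le_zero (le_of_eq (hdeg 0))
      have hc : (K 0).coeff 0 = 1 := by
        have := h1 0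
        rw [h, Polynomial.eval_C] at this
        exact this
      rw [h, hc, map_one]
    have hφ' := Polynomial.eq_C_of_natDegree_le_zero hφ
    rw [hφ']
    have : Polynomial.C (φ.coeff 0) = (φ.coeff 0) • K 0 := by
      rw [hK0, Polynomial.smul_eq_C_mul, mul_one]
    rw [this]
    exact Submodule.smul_mem _ _ (Submodule.subset_span ⟨0, Set.mem_Iic.mpr (Nat.zero_le _), rfl⟩)
  | succ n ih =>
    intro φ hφ
    have hmono : Submodule.span ℝ (K '' Set.Iic n) ≤ Submodule.span ℝ (K '' Set.Iic (n+1)) :=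
      Submodule.span_mono (Set.image_mono (Set.Iic_subset_Iic.mpr (Nat.le_succ n)))
    rcases le_or_gt φ.natDegree n with h | h
    · exact hmono (ih φ h)
    · have hd : φ.natDegree = n + 1 := le_antisymm hφ h
      have hφ0 : φ ≠ 0 := fun h0 => by simp [h0] at hd
      have hKne : K (n+1) ≠ 0 := fun h0 => by simpa [h0] using h1 (n+1)
      set c := φ.leadingCoeff / (K (n+1)).leadingCoeff with hc
      have hcne : c ≠ 0 :=
        div_ne_zero (Polynomial.leadingCoeff_ne_zero.mpr hφ0)
          (Polynomial.leadingCoeff_ne_zero.mpr hKne)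
      have hdegK : (K (n+1)).degree = ((n+1 : ℕ) : WithBot ℕ) := by
        rw [Polynomial.degree_eq_natDegree hKne, hdeg]
      have hdegφ : φ.degree = ((n+1 : ℕ) : WithBot ℕ) := by
        rw [Polynomial.degree_eq_natDegree hφ0, hd]
      have hdegq : (Polynomial.C c * K (n+1)).degree = ((n+1 : ℕ) : WithBot ℕ) := by
        rw [Polynomial.degree_mul, Polynomial.degree_C hcne, hdegK, zero_add]
      have hlc : φ.leadingCoeff = (Polynomial.C c * K (n+1)).leadingCoeff := by
        rw [Polynomial.leadingCoeff_mul, Polynomial.leadingCoeff_C, hc,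
          div_mul_cancel₀ _ (Polynomial.leadingCoeff_ne_zero.mpr hKne)]
      have hψ : (φ - Polynomial.C c * K (n+1)).degree < φ.degree :=
        Polynomial.degree_sub_lt (hdegφ.trans hdegq.symm) hφ0 hlc
      have hψn : (φ - Polynomial.C c * K (n+1)).natDegree ≤ n := by
        by_cases h0 : φ - Polynomial.C c * K (n+1) = 0
        · simp [h0]
        · have := (Polynomial.natDegree_lt_iff_degree_lt h0).mpr (by rw [← hdegφ]; exact hψ)
          omega
      have hrw : φ = (φ - Polynomial.C c * K (n+1)) + c • K (n+1) := by
        rw [Polynomial.smul_eq_C_mul]; ring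
      rw [hrw]
      exact Submodule.add_mem _ (hmono (ih _ hψn))
        (Submodule.smul_mem _ _ (Submodule.subset_span ⟨n+1, Set.mem_Iic.mpr le_rfl, rfl⟩))

lemma lift_integral_s6 (t₀ t₁ : ℝ) (r : ℕ) (K : ℕ → Polynomial ℝ)
    (hK : IsLegendreBasis t₀ t₁ K) (s : ℝ) (a : ℕ → ℝ)
    (ha : ∀ j, j ≤ r → (K j).eval s = a j)
    (φ : Polynomial ℝ) (hφ : φ.natDegree ≤ r) :
    (∫ t in t₀..t₁,
      (∑ i ∈ Finset.range (r+1), (a i * (2*(i:ℝ)+1)) * (K i).eval t) * φ.eval t)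
      = (t₁ - t₀) * φ.eval s := by
  obtain ⟨hdeg, h1, h0, horth⟩ := hK
  have hF : Continuous fun t => ∑ i ∈ Finset.range (r+1), (a i * (2*(i:ℝ)+1)) * (K i).eval t :=
    continuous_finset_sum _ fun i _ => continuous_const.mul (K i).continuous
  have hmem := poly_mem_span t₁ K hdeg h1 r φ hφ
  clear hφ
  induction hmem using Submodule.span_induction with
  | mem q hq =>
    obtain ⟨j, hj, rfl⟩ := hq
    have hj' : j ∈ Finset.range (r+1) := Finset.mem_range.mpr (Nat.lt_succ_of_le hj)
    rw [show (fun t => (∑ i ∈ Finset.range (r+1), (a i * (2*(i:ℝ)+1)) * (K i).eval t) * (K j).eval t)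
        = fun t => ∑ i ∈ Finset.range (r+1), (a i * (2*(i:ℝ)+1)) * ((K i).eval t * (K j).eval t)
        from funext fun t => by rw [Finset.sum_mul]; exact Finset.sum_congr rfl fun i _ => by ring]
    rw [intervalIntegral.integral_finset_sum
      (f := fun i t => (a i * (2*(i:ℝ)+1)) * ((K i).eval t * (K j).eval t)) (fun i _ =>
      (continuous_const.mul ((K i).continuous.mul (K j).continuous)).intervalIntegrable _ _)]
    have : ∀ i ∈ Finset.range (r+1),
        (∫ t in t₀..t₁, (a i * (2*(i:ℝ)+1)) * ((K i).eval t * (K j).eval t))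
          = (a i * (2*(i:ℝ)+1)) * (if i = j then (t₁ - t₀) / (2 * (i : ℝ) + 1) else 0) := by
      intro i _
      rw [intervalIntegral.integral_const_mul, horth i j]
    rw [Finset.sum_congr rfl this, Finset.sum_eq_single j
      (fun i _ hij => by simp [hij]) (fun h => absurd hj' h)]
    have h2j : (2*(j:ℝ)+1) ≠ 0 := by positivity
    rw [ha j hj]
    rw [if_pos rfl]
    field_simp
  | zero => simp
  | add q₁ q₂ hq₁ hq₂ ih₁ ih₂ =>
    simp only [Polynomial.eval_add]
    rw [show (fun t => (∑ i ∈ Finset.range (r+1), (a i * (2*(i:ℝ)+1)) * (K i).eval t) * (q₁.eval t + q₂.eval t))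
        = fun t => (∑ i ∈ Finset.range (r+1), (a i * (2*(i:ℝ)+1)) * (K i).eval t) * q₁.eval t
          + (∑ i ∈ Finset.range (r+1), (a i * (2*(i:ℝ)+1)) * (K i).eval t) * q₂.eval t
        from funext fun t => mul_add _ _ _]
    rw [intervalIntegral.integral_add
      (f := fun t => (∑ i ∈ Finset.range (r+1), (a i * (2*(i:ℝ)+1)) * (K i).eval t) * q₁.eval t)
      (g := fun t => (∑ i ∈ Finset.range (r+1), (a i * (2*(i:ℝ)+1)) * (K i).eval t) * q₂.eval t)
      ((hF.mul q₁.continuous).intervalIntegrable _ _)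
      ((hF.mul q₂.continuous).intervalIntegrable _ _), ih₁, ih₂]
    ring
  | smul c q hq ih =>
    simp only [Polynomial.eval_smul, smul_eq_mul]
    rw [show (fun t => (∑ i ∈ Finset.range (r+1), (a i * (2*(i:ℝ)+1)) * (K i).eval t) * (c * q.eval t))
        = fun t => c * ((∑ i ∈ Finset.range (r+1), (a i * (2*(i:ℝ)+1)) * (K i).eval t) * q.eval t)
        from funext fun t => by ring]
    rw [intervalIntegral.integral_const_mul, ih]
    ring

/-- The energy identity `2λ ∫_I φ² + φ(t₁)² = -φ(t₀)(2 + φ(t₀))` for the dG dual solution. -/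
theorem stmt_6 (t₀ t₁ : ℝ) (ht : t₀ < t₁) (r : ℕ) (K : ℕ → Polynomial ℝ)
    (hK : IsLegendreBasis t₀ t₁ K) (lam : ℝ) (hlam : 0 < lam)
    (φ : Polynomial ℝ) (hφdeg : φ.natDegree ≤ r)
    (hφ : Polynomial.derivative φ - Polynomial.C lam * φ - LopE t₀ t₁ r K (φ.eval t₁)
      = Lop t₀ t₁ r K 1) :
    2 * lam * (∫ t in t₀..t₁, (φ.eval t) ^ 2) + (φ.eval t₁) ^ 2
      = -(φ.eval t₀) * (2 + φ.eval t₀) := by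
  obtain ⟨hdeg, h1, h0, horth⟩ := hK
  have hk : t₁ - t₀ ≠ 0 := sub_ne_zero.mpr (ne_of_gt ht)
  -- integral of Lop 1 against φ
  have hL : (∫ t in t₀..t₁, (Lop t₀ t₁ r K 1).eval t * φ.eval t) = φ.eval t₀ := by
    have h := lift_integral_s6 t₀ t₁ r K ⟨hdeg, h1, h0, horth⟩ t₀ (fun i => (-1:ℝ)^i)
      (fun j _ => h0 j) φ hφdeg
    rw [show (fun t => (Lop t₀ t₁ r K 1).eval t * φ.eval t)
        = fun t => (1/(t₁-t₀)) *
          ((∑ i ∈ Finset.range (r+1), (((-1:ℝ)^i) * (2*(i:ℝ)+1)) * (K i).eval t) * φ.eval t)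
        from funext fun t => by
          simp only [Lop, Polynomial.eval_mul, Polynomial.eval_C, Polynomial.eval_finset_sum]
          ring]
    rw [intervalIntegral.integral_const_mul, h]
    field_simp
  -- integral of LopE z₁ against φ
  have hLE : (∫ t in t₀..t₁, (LopE t₀ t₁ r K (φ.eval t₁)).eval t * φ.eval t)
      = (φ.eval t₁) ^ 2 := by
    have h := lift_integral_s6 t₀ t₁ r K ⟨hdeg, h1, h0, horth⟩ t₁ (fun _ => (1:ℝ))
      (fun j _ => h1 j) φ hφdeg
    simp only [one_mul] at h
    rw [show (fun t => (LopE t₀ t₁ r K (φ.eval t₁)).eval t * φ.eval t)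
        = fun t => (φ.eval t₁/(t₁-t₀)) *
          ((∑ i ∈ Finset.range (r+1), (2*(i:ℝ)+1) * (K i).eval t) * φ.eval t)
        from funext fun t => by
          simp only [LopE, Polynomial.eval_mul, Polynomial.eval_C, Polynomial.eval_finset_sum]
          ring]
    rw [intervalIntegral.integral_const_mul, h]
    field_simp
  -- FTC for ∫ φ' φ
  have hD : (∫ t in t₀..t₁, (Polynomial.derivative φ).eval t * φ.eval t)
      = ((φ.eval t₁)^2 - (φ.eval t₀)^2)/2 := by
    have key : (∫ t in t₀..t₁, (Polynomial.derivative (φ*φ)).eval t)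
        = (φ*φ).eval t₁ - (φ*φ).eval t₀ :=
      intervalIntegral.integral_eq_sub_of_hasDerivAt (fun x _ => Polynomial.hasDerivAt (φ*φ) x)
        ((Polynomial.continuous _).intervalIntegrable _ _)
    rw [show (fun t => (Polynomial.derivative (φ*φ)).eval t)
        = fun t => 2 * ((Polynomial.derivative φ).eval t * φ.eval t)
        from funext fun t => by
          simp only [Polynomial.derivative_mul, Polynomial.eval_add, Polynomial.eval_mul]
          ring] at key
    rw [intervalIntegral.integral_const_mul] at key
    simp only [Polynomial.eval_mul] at key
    rw [show ((φ.eval t₁)^2 - (φ.eval t₀)^2)/2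
        = ((φ.eval t₁ * φ.eval t₁) - (φ.eval t₀ * φ.eval t₀))/2 from by ring]
    linarith
  -- the ODE rearranged
  have hode : Polynomial.derivative φ
      = Polynomial.C lam * φ + LopE t₀ t₁ r K (φ.eval t₁) + Lop t₀ t₁ r K 1 := by
    linear_combination hφ
  -- split the integral
  have hcφ : Continuous fun t => φ.eval t := φ.continuous
  have hsplit : (∫ t in t₀..t₁, (Polynomial.derivative φ).eval t * φ.eval t)
      = lam * (∫ t in t₀..t₁, (φ.eval t)^2)
        + (∫ t in t₀..t₁, (LopE t₀ t₁ r K (φ.eval t₁)).eval t * φ.eval t)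
        + (∫ t in t₀..t₁, (Lop t₀ t₁ r K 1).eval t * φ.eval t) := by
    have hi1 : IntervalIntegrable (fun t => lam * (φ.eval t)^2) volume t₀ t₁ :=
      (continuous_const.mul (hcφ.pow 2)).intervalIntegrable _ _
    have hi2 : IntervalIntegrable
        (fun t => (LopE t₀ t₁ r K (φ.eval t₁)).eval t * φ.eval t) volume t₀ t₁ :=
      ((Polynomial.continuous _).mul hcφ).intervalIntegrable _ _
    have hi3 : IntervalIntegrable
        (fun t => (Lop t₀ t₁ r K 1).eval t * φ.eval t) volume t₀ t₁ :=
      ((Polynomial.continuous _).mul hcφ).intervalIntegrable _ _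
    rw [show (fun t => (Polynomial.derivative φ).eval t * φ.eval t)
        = fun t => (lam * (φ.eval t)^2
          + (LopE t₀ t₁ r K (φ.eval t₁)).eval t * φ.eval t)
          + (Lop t₀ t₁ r K 1).eval t * φ.eval t
        from funext fun t => by
          rw [hode]
          simp only [Polynomial.eval_add, Polynomial.eval_mul, Polynomial.eval_C]
          ring]
    rw [intervalIntegral.integral_add (hi1.add hi2) hi3,
      intervalIntegral.integral_add hi1 hi2, intervalIntegral.integral_const_mul]
  rw [hL, hLE] at hsplit
  rw [hsplit] at hD
  linear_combination 2 * hD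
end
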